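/- Let Σ = {a,b,c} with a,b of rank 0 and c of rank 2, and let T be the set of trees over Σ such that the path from the root to each a-labelled leaf contains an even number of branching nodes, where an internal node is branching if both its left and its right subtree contain an a-labelled leaf. Then T is definable in first-order logic with unary deterministic transitive closure (FO+DTC^1), and T is accepted by a deterministic single-head tree-walking automaton with one nested pebble. -/

import Mathlib

namespace NestedPebbles

/-- Trees over a ranked alphabet `(Sig, rank)`: terms `σ(t₁,…,tₙ)` with `rank σ = n`. -/
inductive RTree (Sig : Type) (rank : Sig → ℕ) : Type
  | node (a : Sig) (children : Fin (rank a) → RTree Sig rank) : RTree Sig rank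

namespace RTree

variable {Sig : Type} {rank : Sig → ℕ}

/-- The label of the root symbol. -/
def label : RTree Sig rank → Sig
  | node a _ => a

/-- The `i`-th (0-based) immediate subtree, if it exists. -/
def child : RTree Sig rank → ℕ → Option (RTree Sig rank)
  | node a c, i => if h : i < rank a then some (c ⟨i, h⟩) else none

/-- The subtree at a position (a list of 0-based child indices, read from the root). -/
def subtree : RTree Sig rank → List ℕ → Option (RTree Sig rank)
  | t, [] => some t
  | t, i :: p => (t.child i).bind fun s => s.subtree p

end RTree

variable {Sig : Type} {rank : Sig → ℕ}

/-- `p` is (the address of) a node of `t`. -/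
def IsPos (t : RTree Sig rank) (p : List ℕ) : Prop := (t.subtree p).isSome = true

/-- The type of nodes of a tree `t`, as valid positions. -/
def Pos (t : RTree Sig rank) : Type := { p : List ℕ // IsPos t p }

/-- The root node. -/
def rootPos (t : RTree Sig rank) : Pos t := ⟨[], rfl⟩

/-- The label of the node of `t` at position `p`. -/
def labelAt (t : RTree Sig rank) (p : List ℕ) : Option Sig := (t.subtree p).map RTree.label

/-- The child number of a node: `0` for the root, and `j` for a `j`-th child (1-based). -/
def childNo (p : List ℕ) : ℕ :=
  match p.getLast? with
  | none => 0
  | some j => j + 1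

/-!  ### First-order logic with k-ary transitive closure, on trees  -/

/-- First-order formulas over a ranked alphabet, with a `k`-ary transitive closure
operator.  Variables are natural numbers.  `lab a x` means `x` has label `a`;
`edg i x y` means `y` is the `i`-th child of `x` (`i` is 1-based);
`le x y` means `x` is an ancestor of `y`; `tc xs ys φ us vs` is the transitive
closure `φ*` of `φ` with respect to the tuples of variables `xs`, `ys` (which it
binds), applied to the tuples of variables `us`, `vs`. -/
inductive TForm (Sig : Type) (rank : Sig → ℕ) (k : ℕ) : Type
  | lab (a : Sig) (x : ℕ)
  | edg (i : ℕ) (x y : ℕ)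
  | le (x y : ℕ)
  | eq (x y : ℕ)
  | not (φ : TForm Sig rank k)
  | and (φ ψ : TForm Sig rank k)
  | or (φ ψ : TForm Sig rank k)
  | ex (x : ℕ) (φ : TForm Sig rank k)
  | all (x : ℕ) (φ : TForm Sig rank k)
  | tc (xs ys : Fin k → ℕ) (φ : TForm Sig rank k) (us vs : Fin k → ℕ)

/-- Update a valuation on a tuple of variables simultaneously. -/
noncomputable def updVec {α : Type} {k : ℕ} (ν : ℕ → α) (xs : Fin k → ℕ) (a : Fin k → α) :
    ℕ → α :=
  fun n => if h : ∃ i, xs i = n then a h.choose else ν n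

/-- Satisfaction of a formula in a tree `t` under a valuation of the variables by
nodes of `t`. -/
def Sat {k : ℕ} (t : RTree Sig rank) : TForm Sig rank k → (ℕ → Pos t) → Prop
  | .lab a x, ν => labelAt t (ν x).1 = some a
  | .edg i x y, ν => 1 ≤ i ∧ (ν y).1 = (ν x).1 ++ [i - 1]
  | .le x y, ν => (ν x).1 <+: (ν y).1
  | .eq x y, ν => ν x = ν y
  | .not φ, ν => ¬ Sat t φ ν
  | .and φ ψ, ν => Sat t φ ν ∧ Sat t ψ ν
  | .or φ ψ, ν => Sat t φ ν ∨ Sat t ψ ν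
  | .ex x φ, ν => ∃ u : Pos t, Sat t φ (Function.update ν x u)
  | .all x φ, ν => ∀ u : Pos t, Sat t φ (Function.update ν x u)
  | .tc xs ys φ us vs, ν =>
      Relation.ReflTransGen
        (fun a b : Fin k → Pos t => Sat t φ (updVec (updVec ν xs a) ys b))
        (fun i => ν (us i)) (fun i => ν (vs i))

/-- The free variables of a formula. -/
def freeVars {k : ℕ} : TForm Sig rank k → Set ℕ
  | .lab _ x => {x}
  | .edg _ x y => {x, y}
  | .le x y => {x, y}
  | .eq x y => {x, y}
  | .not φ => freeVars φ
  | .and φ ψ => freeVars φ ∪ freeVars ψ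
  | .or φ ψ => freeVars φ ∪ freeVars ψ
  | .ex x φ => freeVars φ \ {x}
  | .all x φ => freeVars φ \ {x}
  | .tc xs ys φ us vs =>
      (freeVars φ \ (Set.range xs ∪ Set.range ys)) ∪ Set.range us ∪ Set.range vs

/-- Two `k`-tuples of variables consist of `2k` pairwise distinct variables. -/
def Distinct2 {k : ℕ} (xs ys : Fin k → ℕ) : Prop :=
  Function.Injective xs ∧ Function.Injective ys ∧ ∀ i j, xs i ≠ ys j

/-- `φ` is functional in the tuples of variables `xs`, `ys`: for every tree, every
valuation of the remaining variables, and every value of `xs`, there is at most one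
value of `ys` satisfying `φ`. -/
def FunctionalIn {k : ℕ} (φ : TForm Sig rank k) (xs ys : Fin k → ℕ) : Prop :=
  ∀ (t : RTree Sig rank) (ν : ℕ → Pos t) (a b b' : Fin k → Pos t),
    Sat t φ (updVec (updVec ν xs a) ys b) →
    Sat t φ (updVec (updVec ν xs a) ys b') → b = b'

/-- Well-formedness: in each transitive closure the `2k` bound variables are
pairwise distinct and occur free in the body. -/
def WF {k : ℕ} : TForm Sig rank k → Prop
  | .not φ => WF φ
  | .and φ ψ => WF φ ∧ WF ψ
  | .or φ ψ => WF φ ∧ WF ψ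
  | .ex _ φ => WF φ
  | .all _ φ => WF φ
  | .tc xs ys φ _ _ =>
      Distinct2 xs ys ∧ (Set.range xs ∪ Set.range ys) ⊆ freeVars φ ∧ WF φ
  | _ => True

/-- All transitive closures occurring in the formula are deterministic, i.e., applied
to functional formulas. -/
def DetTC {k : ℕ} : TForm Sig rank k → Prop
  | .not φ => DetTC φ
  | .and φ ψ => DetTC φ ∧ DetTC ψ
  | .or φ ψ => DetTC φ ∧ DetTC ψ
  | .ex _ φ => DetTC φ
  | .all _ φ => DetTC φ
  | .tc xs ys φ _ _ => FunctionalIn φ xs ys ∧ DetTC φ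
  | _ => True

/-- All occurrences of transitive closure are positive (within the scope of an even
number of negations); the polarity parameter `b` is `true` for an even number. -/
def PosTC {k : ℕ} : Bool → TForm Sig rank k → Prop
  | b, .not φ => PosTC (!b) φ
  | b, .and φ ψ => PosTC b φ ∧ PosTC b ψ
  | b, .or φ ψ => PosTC b φ ∧ PosTC b ψ
  | b, .ex _ φ => PosTC b φ
  | b, .all _ φ => PosTC b φ
  | b, .tc _ _ φ _ _ => b = true ∧ PosTC b φ
  | _, _ => True

/-- The formula contains no transitive closure operator (pure first-order). -/
def TCFree {k : ℕ} : TForm Sig rank k → Prop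
  | .not φ => TCFree φ
  | .and φ ψ => TCFree φ ∧ TCFree ψ
  | .or φ ψ => TCFree φ ∧ TCFree ψ
  | .ex _ φ => TCFree φ
  | .all _ φ => TCFree φ
  | .tc _ _ _ _ _ => False
  | _ => True

/-- The tree language defined by a (closed) formula. -/
def treesOf {k : ℕ} (φ : TForm Sig rank k) : Set (RTree Sig rank) :=
  {t | Sat t φ fun _ => rootPos t}

/-- `FO+DTC^k`: tree languages definable by closed first-order formulas with `k`-ary
deterministic transitive closure. -/
def FODTC (Sig : Type) (rank : Sig → ℕ) (k : ℕ) : Set (Set (RTree Sig rank)) :=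
  {L | ∃ φ : TForm Sig rank k, WF φ ∧ DetTC φ ∧ freeVars φ = ∅ ∧ L = treesOf φ}

/-- `FO+TC^k`: tree languages definable by closed first-order formulas with `k`-ary
transitive closure. -/
def FOTC (Sig : Type) (rank : Sig → ℕ) (k : ℕ) : Set (Set (RTree Sig rank)) :=
  {L | ∃ φ : TForm Sig rank k, WF φ ∧ freeVars φ = ∅ ∧ L = treesOf φ}

/-- `FO+posTC^k`: tree languages definable by closed first-order formulas in which
every occurrence of the `k`-ary transitive closure operator is positive. -/
def FOposTC (Sig : Type) (rank : Sig → ℕ) (k : ℕ) : Set (Set (RTree Sig rank)) :=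
  {L | ∃ φ : TForm Sig rank k, WF φ ∧ PosTC true φ ∧ freeVars φ = ∅ ∧ L = treesOf φ}

/-!  ### k-head tree-walking automata with nested pebbles  -/

/-- Tests of a `k`-head tree-walking automaton with pebble set `X`:
label of the node under head `i`, presence of pebble `x` at head `i`, and
child number of the node under head `i`. -/
inductive TTest (Sig : Type) (k : ℕ) (X : Type) : Type
  | lab (i : Fin k) (a : Sig)
  | peb (i : Fin k) (x : X)
  | chno (i : Fin k) (j : ℕ)

/-- Instructions: move head `i` up / down to the `j`-th child (1-based), drop a
pebble at head `i`, retrieve the most recently dropped pebble (from a distance),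
or perform a positive (`b = true`) or negated (`b = false`) test. -/
inductive TInstr (Sig : Type) (k : ℕ) (X : Type) : Type
  | up (i : Fin k)
  | down (i : Fin k) (j : ℕ)
  | dropPeb (i : Fin k) (x : X)
  | retrieve (x : X)
  | test (b : Bool) (τ : TTest Sig k X)

/-- A `k`-head tree-walking automaton with nested pebbles: a finite state set `Q`,
a finite pebble set `X`, an initial state, accepting states, and a finite set of
instructions `⟨p, χ, q⟩`. -/
structure TWA (Sig : Type) (rank : Sig → ℕ) (k : ℕ) : Type 1 where
  Q : Type
  finQ : Fintype Q
  X : Type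
  finX : Fintype X
  q0 : Q
  acc : Set Q
  instr : Set (Q × TInstr Sig k X × Q)
  instrFin : instr.Finite

/-- Configurations: a state, the positions of the `k` heads, and the stack of
dropped pebbles with their positions (most recent first). -/
abbrev TConf {Sig : Type} {rank : Sig → ℕ} {k : ℕ} (A : TWA Sig rank k)
    (t : RTree Sig rank) : Type :=
  A.Q × (Fin k → Pos t) × List (A.X × Pos t)

/-- Semantics of tests. -/
def testHolds {k : ℕ} (t : RTree Sig rank) {X : Type} (τ : TTest Sig k X)
    (hs : Fin k → Pos t) (π : List (X × Pos t)) : Prop :=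
  match τ with
  | .lab i a => labelAt t (hs i).1 = some a
  | .peb i x => (x, hs i) ∈ π
  | .chno i j => childNo (hs i).1 = j

/-- Semantics of a single instruction, relating head positions and pebble stacks
before and after. -/
def instrStep {k : ℕ} (t : RTree Sig rank) {X : Type} (ins : TInstr Sig k X)
    (hs : Fin k → Pos t) (π : List (X × Pos t))
    (hs' : Fin k → Pos t) (π' : List (X × Pos t)) : Prop :=
  match ins with
  | .up i => π' = π ∧ (∃ j : ℕ, (hs i).1 = (hs' i).1 ++ [j]) ∧ ∀ h, h ≠ i → hs' h = hs h
  | .down i j => π' = π ∧ 1 ≤ j ∧ (hs' i).1 = (hs i).1 ++ [j - 1] ∧ ∀ h, h ≠ i → hs' h = hs h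
  | .dropPeb i x => hs' = hs ∧ π' = (x, hs i) :: π ∧ ∀ w, (x, w) ∉ π
  | .retrieve x => hs' = hs ∧ ∃ w, π = (x, w) :: π'
  | .test b τ => hs' = hs ∧ π' = π ∧ (testHolds t τ hs π ↔ b = true)

/-- The step relation of automaton `A` on tree `t`. -/
def Step {k : ℕ} (A : TWA Sig rank k) (t : RTree Sig rank) :
    TConf A t → TConf A t → Prop :=
  fun c c' => ∃ ins : TInstr Sig k A.X,
    (c.1, ins, c'.1) ∈ A.instr ∧ instrStep t ins c.2.1 c.2.2 c'.2.1 c'.2.2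

/-- `χ'` is the negation of the test `χ`. -/
def negOf {k : ℕ} {X : Type} (χ χ' : TInstr Sig k X) : Prop :=
  ∃ b τ, χ = TInstr.test b τ ∧ χ' = TInstr.test (!b) τ

/-- Determinism: any two distinct instructions with the same source state consist
of a test and its negation. -/
def Deterministic {k : ℕ} (A : TWA Sig rank k) : Prop :=
  ∀ p χ₁ q₁ χ₂ q₂, (p, χ₁, q₁) ∈ A.instr → (p, χ₂, q₂) ∈ A.instr →
    (χ₁, q₁) ≠ (χ₂, q₂) → negOf χ₁ χ₂ ∨ negOf χ₂ χ₁

/-- The initial configuration: initial state, all heads at the root, no pebbles. -/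
def initConf {k : ℕ} (A : TWA Sig rank k) (t : RTree Sig rank) : TConf A t :=
  (A.q0, fun _ => rootPos t, [])

/-- A configuration is halting if no step is possible from it. -/
def HaltingConf {k : ℕ} (A : TWA Sig rank k) (t : RTree Sig rank) (c : TConf A t) : Prop :=
  ∀ c', ¬ Step A t c c'

/-- Acceptance: some computation from the initial configuration halts in an
accepting state with all heads at the root and no pebbles on the tree. -/
def Accepts {k : ℕ} (A : TWA Sig rank k) (t : RTree Sig rank) : Prop :=
  ∃ q ∈ A.acc,
    Relation.ReflTransGen (Step A t) (initConf A t) (q, fun _ => rootPos t, []) ∧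
    HaltingConf A t (q, fun _ => rootPos t, [])

/-- The tree language accepted by `A`. -/
def Lang {k : ℕ} (A : TWA Sig rank k) : Set (RTree Sig rank) := {t | Accepts A t}

/-- The automaton uses no pebbles at all. -/
def PebbleFree {k : ℕ} (A : TWA Sig rank k) : Prop :=
  ∀ p χ q, (p, χ, q) ∈ A.instr →
    (∀ i x, χ ≠ TInstr.dropPeb i x) ∧ (∀ x, χ ≠ TInstr.retrieve x) ∧
    (∀ b i x, χ ≠ TInstr.test b (TTest.peb i x))

/-- `DPTWA^k`: tree languages accepted by deterministic `k`-head tree-walking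
automata with nested pebbles. -/
def DPTWA (Sig : Type) (rank : Sig → ℕ) (k : ℕ) : Set (Set (RTree Sig rank)) :=
  {L | ∃ A : TWA Sig rank k, Deterministic A ∧ L = Lang A}

/-- `NPTWA^k`: tree languages accepted by nondeterministic `k`-head tree-walking
automata with nested pebbles. -/
def NPTWA (Sig : Type) (rank : Sig → ℕ) (k : ℕ) : Set (Set (RTree Sig rank)) :=
  {L | ∃ A : TWA Sig rank k, L = Lang A}

/-- `NTWA^k`: tree languages accepted by nondeterministic `k`-head tree-walking
automata without pebbles. -/
def NTWA (Sig : Type) (rank : Sig → ℕ) (k : ℕ) : Set (Set (RTree Sig rank)) :=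
  {L | ∃ A : TWA Sig rank k, PebbleFree A ∧ L = Lang A}

end NestedPebbles

namespace NestedPebbles

/-- The alphabet `{a, b, c}`. -/
inductive ABC : Type
  | a | b | c
deriving DecidableEq

/-- `a` and `b` are nullary, `c` is binary. -/
def rankABC : ABC → ℕ
  | .a => 0
  | .b => 0
  | .c => 2

instance : Fintype ABC :=
  ⟨⟨{ABC.a, ABC.b, ABC.c}, by decide⟩, fun x => by cases x <;> decide⟩

/-- The tree contains an `a`-labelled (leaf) node. -/
def hasA : RTree ABC rankABC → Prop
  | .node x ch => x = ABC.a ∨ ∃ i, hasA (ch i)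

/-- The node of `t` at position `p` is branching: both its left and its right
subtree contain an `a`-labelled leaf. -/
def Branching (t : RTree ABC rankABC) (p : List ℕ) : Prop :=
  (∃ s, t.subtree (p ++ [0]) = some s ∧ hasA s) ∧
  (∃ s, t.subtree (p ++ [1]) = some s ∧ hasA s)

/-- The language `T`: trees over `{a,b,c}` such that the path from the root to
each `a`-labelled leaf contains an even number of branching nodes. -/
def Tlang : Set (RTree ABC rankABC) :=
  {t | ∀ p : List ℕ, labelAt t p = some ABC.a →
        Even (Nat.card { q : List ℕ // q <+: p ∧ Branching t q })}


/-! ### Basic tree and position lemmas -/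

lemma subtree_cons {Sig : Type} {rank : Sig → ℕ} (t : RTree Sig rank) (i : ℕ) (p : List ℕ) :
    t.subtree (i :: p) = (t.child i).bind (fun s => s.subtree p) := rfl

lemma child_node {Sig : Type} {rank : Sig → ℕ} (a : Sig) (ch : Fin (rank a) → RTree Sig rank)
    (i : ℕ) :
    (RTree.node a ch).child i = if h : i < rank a then some (ch ⟨i, h⟩) else none := rfl

lemma subtree_append {Sig : Type} {rank : Sig → ℕ} (t : RTree Sig rank) (p q : List ℕ) :
    t.subtree (p ++ q) = (t.subtree p).bind (fun s => s.subtree q) := by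
  induction p generalizing t with
  | nil => simp [RTree.subtree]
  | cons i p ih =>
    rw [List.cons_append, subtree_cons, subtree_cons]
    cases t.child i with
    | none => rfl
    | some s => exact ih s

lemma isPos_of_prefix {Sig : Type} {rank : Sig → ℕ} {t : RTree Sig rank} {p q : List ℕ}
    (hq : q <+: p) (hp : IsPos t p) : IsPos t q := by
  obtain ⟨r, rfl⟩ := hq
  unfold IsPos at *
  rw [subtree_append] at hp
  cases h : t.subtree q with
  | none => rw [h] at hp; simp at hp
  | some s => simp

lemma hasA_iff (s : RTree ABC rankABC) :
    hasA s ↔ ∃ p, labelAt s p = some ABC.a := by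
  induction s with
  | node x ch ih =>
    constructor
    · rintro (rfl | ⟨i, hi⟩)
      · exact ⟨[], rfl⟩
      · obtain ⟨p, hp⟩ := (ih i).mp hi
        refine ⟨i.val :: p, ?_⟩
        rw [labelAt, subtree_cons, child_node]
        simp only [i.isLt, dif_pos, Fin.eta, Option.bind_some]
        exact hp
    · rintro ⟨p, hp⟩
      cases p with
      | nil =>
        simp [labelAt, RTree.subtree, RTree.label] at hp
        exact Or.inl hp
      | cons i p =>
        rw [labelAt, subtree_cons, child_node] at hp
        by_cases h : i < rankABC x
        · simp only [h, dif_pos, Option.bind_some] at hp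
          exact Or.inr ⟨⟨i, h⟩, (ih _).mpr ⟨p, hp⟩⟩
        · simp [h] at hp

lemma branching_isPos {t : RTree ABC rankABC} {p : List ℕ} (h : Branching t p) : IsPos t p :=
  isPos_of_prefix ⟨[0], rfl⟩ (by obtain ⟨⟨s, hs, _⟩, _⟩ := h; rw [IsPos, hs]; rfl)

lemma branching_iff_subtree {t : RTree ABC rankABC} {p : List ℕ} {s : RTree ABC rankABC}
    (h : t.subtree p = some s) : Branching t p ↔ Branching s [] := by
  unfold Branching
  rw [show p ++ [0] = p ++ ([] ++ [0]) by simp, show p ++ [1] = p ++ ([] ++ [1]) by simp,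
    subtree_append, subtree_append, h]
  rfl

lemma branching_node_c (ch : Fin (rankABC ABC.c) → RTree ABC rankABC) :
    Branching (RTree.node ABC.c ch) [] ↔
      hasA (ch ⟨0, by decide⟩) ∧ hasA (ch ⟨1, by decide⟩) := by
  unfold Branching
  have h0 : (RTree.node ABC.c ch).subtree ([] ++ [0]) = some (ch ⟨0, by decide⟩) := by
    rw [List.nil_append, show ([0] : List ℕ) = 0 :: [] from rfl, subtree_cons, child_node]
    rfl
  have h1 : (RTree.node ABC.c ch).subtree ([] ++ [1]) = some (ch ⟨1, by decide⟩) := by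
    rw [List.nil_append, show ([1] : List ℕ) = 1 :: [] from rfl, subtree_cons, child_node]
    rfl
  rw [h0, h1]
  constructor
  · rintro ⟨⟨s, hs, hA⟩, ⟨s', hs', hA'⟩⟩
    cases hs; cases hs'; exact ⟨hA, hA'⟩
  · rintro ⟨hA, hA'⟩
    exact ⟨⟨_, rfl, hA⟩, ⟨_, rfl, hA'⟩⟩

lemma not_branching_leaf {x : ABC} (hx : rankABC x = 0) (ch : Fin (rankABC x) → RTree ABC rankABC) :
    ¬ Branching (RTree.node x ch) [] := by
  rintro ⟨⟨s, hs, _⟩, _⟩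
  rw [show ([] ++ [0] : List ℕ) = 0 :: [] from rfl, subtree_cons, child_node] at hs
  rw [dif_neg (by omega)] at hs
  simp at hs

lemma not_branching_of_label_a {t : RTree ABC rankABC} {p : List ℕ}
    (h : labelAt t p = some ABC.a) : ¬ Branching t p := by
  rw [labelAt] at h
  cases hs : t.subtree p with
  | none => rw [hs] at h; simp at h
  | some s =>
    rw [hs] at h
    simp only [Option.map_some, Option.some.injEq] at h
    rw [branching_iff_subtree hs]
    cases s with
    | node x ch =>
      have hx : x = ABC.a := h
      subst hx
      exact not_branching_leaf (x := ABC.a) rfl ch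

/-! ### Counting branching prefixes -/

def brS (t : RTree ABC rankABC) (p : List ℕ) : Set (List ℕ) := {q | q <+: p ∧ Branching t q}

def brSs (t : RTree ABC rankABC) (p : List ℕ) : Set (List ℕ) :=
  {q | q <+: p ∧ q ≠ p ∧ Branching t q}

lemma finite_prefixes (p : List ℕ) : {q : List ℕ | q <+: p}.Finite := by
  have hsub : {q : List ℕ | q <+: p} ⊆ (fun n => p.take n) '' (Set.Iic p.length) := by
    intro q hq
    exact ⟨q.length, by simpa using hq.length_le, ((List.prefix_iff_eq_take.mp hq)).symm⟩
  exact ((Set.finite_Iic _).image _).subset hsub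

lemma brS_finite (t : RTree ABC rankABC) (p : List ℕ) : (brS t p).Finite :=
  (finite_prefixes p).subset fun _ h => h.1

lemma brSs_finite (t : RTree ABC rankABC) (p : List ℕ) : (brSs t p).Finite :=
  (finite_prefixes p).subset fun _ h => h.1

lemma brS_eq_brSs_of_label_a {t : RTree ABC rankABC} {p : List ℕ}
    (h : labelAt t p = some ABC.a) : brS t p = brSs t p := by
  ext q
  simp only [brS, brSs, Set.mem_setOf_eq]
  constructor
  · rintro ⟨h1, h2⟩
    refine ⟨h1, ?_, h2⟩
    rintro rfl
    exact not_branching_of_label_a h h2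
  · rintro ⟨h1, _, h2⟩; exact ⟨h1, h2⟩

/-! ### The "nearest branching proper ancestor" relation and parity via chains -/

def pbRel (t : RTree ABC rankABC) (x z : List ℕ) : Prop :=
  z <+: x ∧ z ≠ x ∧ Branching t z ∧
    ∀ w, z <+: w → w <+: x → w ≠ z → w ≠ x → ¬ Branching t w

def Step2 (t : RTree ABC rankABC) (x y : List ℕ) : Prop :=
  ∃ z, pbRel t x z ∧ pbRel t z y

lemma prefix_antisymm {p q : List ℕ} (h1 : p <+: q) (h2 : q <+: p) : p = q :=
  h1.eq_of_length (le_antisymm h1.length_le h2.length_le)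

lemma pbRel_unique {t : RTree ABC rankABC} {x z z' : List ℕ}
    (h : pbRel t x z) (h' : pbRel t x z') : z = z' := by
  obtain ⟨hz, hne, hbr, hmax⟩ := h
  obtain ⟨hz', hne', hbr', hmax'⟩ := h'
  by_contra hzz
  rcases List.prefix_or_prefix_of_prefix hz hz' with hp | hp
  · exact hmax z' hp hz' (Ne.symm hzz) hne' hbr'
  · exact hmax' z hp hz hzz hne hbr

lemma pbRel_exists {t : RTree ABC rankABC} {p : List ℕ} (h : (brSs t p).Nonempty) :
    ∃ z, pbRel t p z := by
  obtain ⟨z, hz, hmax⟩ := Set.Finite.exists_maximalFor List.length _ (brSs_finite t p) h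
  obtain ⟨hzp, hzne, hzbr⟩ := hz
  refine ⟨z, hzp, hzne, hzbr, ?_⟩
  intro w hzw hwp hwz hwp' hwbr
  have hw : w ∈ brSs t p := ⟨hwp, hwp', hwbr⟩
  have := le_antisymm hzw.length_le (hmax hw hzw.length_le)
  exact hwz (hzw.eq_of_length this).symm

lemma brSs_insert_of_pbRel {t : RTree ABC rankABC} {p z : List ℕ} (h : pbRel t p z) :
    brSs t p = insert z (brSs t z) := by
  obtain ⟨hzp, hzne, hzbr, hmax⟩ := h
  ext q
  simp only [brSs, Set.mem_setOf_eq, Set.mem_insert_iff]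
  constructor
  · rintro ⟨hqp, hqne, hqbr⟩
    rcases List.prefix_or_prefix_of_prefix hqp hzp with hp | hp
    · by_cases hqz : q = z
      · exact Or.inl hqz
      · exact Or.inr ⟨hp, hqz, hqbr⟩
    · by_cases hqz : q = z
      · exact Or.inl hqz
      · exact absurd hqbr (hmax q hp hqp (Ne.symm (fun e => hqz e.symm)) hqne)
  · rintro (rfl | ⟨hqz, hqne, hqbr⟩)
    · exact ⟨hzp, hzne, hzbr⟩
    · refine ⟨hqz.trans hzp, ?_, hqbr⟩
      rintro rfl
      exact hzne (prefix_antisymm hzp hqz)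

lemma brSs_ncard_of_pbRel {t : RTree ABC rankABC} {p z : List ℕ} (h : pbRel t p z) :
    (brSs t p).ncard = (brSs t z).ncard + 1 := by
  rw [brSs_insert_of_pbRel h]
  rw [Set.ncard_insert_of_notMem (fun hz => hz.2.1 rfl) (brSs_finite t z)]

lemma even_iff_chain (t : RTree ABC rankABC) (p : List ℕ) :
    Even ((brSs t p).ncard) ↔
      ∃ r, Relation.ReflTransGen (Step2 t) p r ∧ brSs t r = ∅ := by
  constructor
  · intro hev
    generalize hn : (brSs t p).ncard = n at hev
    induction n using Nat.strong_induction_on generalizing p with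
    | _ n ih =>
      rcases Set.eq_empty_or_nonempty (brSs t p) with he | hne
      · exact ⟨p, Relation.ReflTransGen.refl, he⟩
      · obtain ⟨z, hz⟩ := pbRel_exists hne
        have hcz := brSs_ncard_of_pbRel hz
        rcases Set.eq_empty_or_nonempty (brSs t z) with hez | hnez
        · rw [hez, Set.ncard_empty] at hcz
          rw [hcz] at hn
          rcases hev with ⟨k, hk⟩
          omega
        · obtain ⟨q, hq⟩ := pbRel_exists hnez
          have hcq := brSs_ncard_of_pbRel hq
          have hlt : (brSs t q).ncard < n := by omega
          have hev' : Even ((brSs t q).ncard) := by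
            have : n = (brSs t q).ncard + 2 := by omega
            rw [this] at hev
            rcases hev with ⟨k, hk⟩
            exact ⟨k - 1, by omega⟩
          obtain ⟨r, hr, hre⟩ := ih _ hlt q rfl hev'
          exact ⟨r, Relation.ReflTransGen.head ⟨z, hz, hq⟩ hr, hre⟩
  · rintro ⟨r, hchain, hre⟩
    induction hchain using Relation.ReflTransGen.head_induction_on with
    | refl => rw [hre]; simp
    | head hstep _ ih =>
      obtain ⟨z, hz, hq⟩ := hstep
      have h1 := brSs_ncard_of_pbRel hz
      have h2 := brSs_ncard_of_pbRel hq
      rcases ih with ⟨k, hk⟩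
      exact ⟨k + 1, by omega⟩

/-! ### Positions -/

lemma pos_ext {t : RTree ABC rankABC} {u v : Pos t} (h : u.1 = v.1) : u = v := Subtype.ext h

lemma labelAt_isPos {Sig : Type} {rank : Sig → ℕ} {t : RTree Sig rank} {p : List ℕ} {x : Sig}
    (h : labelAt t p = some x) : IsPos t p := by
  rw [labelAt] at h
  unfold IsPos
  cases hs : t.subtree p with
  | none => rw [hs] at h; simp at h
  | some s => simp

lemma rtg_isPos {t : RTree ABC rankABC} {p r : List ℕ}
    (h : Relation.ReflTransGen (Step2 t) p r) (hp : IsPos t p) : IsPos t r := by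
  induction h with
  | refl => exact hp
  | tail _ hstep _ =>
    obtain ⟨z, _, hzr⟩ := hstep
    exact branching_isPos hzr.2.2.1

lemma step2_unique {t : RTree ABC rankABC} {x y y' : List ℕ}
    (h : Step2 t x y) (h' : Step2 t x y') : y = y' := by
  obtain ⟨z, h1, h2⟩ := h
  obtain ⟨z', h1', h2'⟩ := h'
  cases pbRel_unique h1 h1'
  exact pbRel_unique h2 h2'

/-! ### The FO+DTC formula -/

abbrev F1 := TForm ABC rankABC 1

def fHasA (u : ℕ) : F1 := .ex 12 (.and (.le u 12) (.lab ABC.a 12))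

def fBr (y : ℕ) : F1 :=
  .ex 10 (.ex 11 (.and (.and (.edg 1 y 10) (.edg 2 y 11)) (.and (fHasA 10) (fHasA 11))))

def fStrict (z x : ℕ) : F1 := .and (.le z x) (.not (.eq z x))

def fPb (x z : ℕ) : F1 :=
  .and (.and (fStrict z x) (fBr z))
    (.not (.ex 5 (.and (.and (fStrict z 5) (fStrict 5 x)) (fBr 5))))

def fStep : F1 := .ex 4 (.and (fPb 2 4) (fPb 4 3))

def fNoBr (y : ℕ) : F1 := .not (.ex 6 (.and (fStrict 6 y) (fBr 6)))

def fTop : F1 :=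
  .all 0 (.or (.not (.lab ABC.a 0))
    (.ex 1 (.and (.tc ![2] ![3] fStep ![0] ![1]) (fNoBr 1))))

/-! ### Satisfaction lemmas -/

lemma sat_fHasA {t : RTree ABC rankABC} {ν : ℕ → Pos t} {u : ℕ} (hu : u ≠ 12)
    {s : RTree ABC rankABC} (hs : t.subtree (ν u).1 = some s) :
    Sat t (fHasA u) ν ↔ hasA s := by
  simp only [fHasA, Sat]
  constructor
  · rintro ⟨w, hle, hl⟩
    rw [Function.update_self] at hl
    rw [Function.update_of_ne hu, Function.update_self] at hle
    obtain ⟨r, hr⟩ := hle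
    rw [← hr, labelAt, subtree_append, hs, Option.bind_some] at hl
    exact (hasA_iff s).mpr ⟨r, hl⟩
  · intro h
    obtain ⟨r, hr⟩ := (hasA_iff s).mp h
    have hpos : IsPos t ((ν u).1 ++ r) := by
      unfold IsPos
      rw [subtree_append, hs, Option.bind_some]
      exact labelAt_isPos hr
    refine ⟨⟨(ν u).1 ++ r, hpos⟩, ?_, ?_⟩
    · erw [Function.update_of_ne hu, Function.update_self]
      exact ⟨r, rfl⟩
    · erw [Function.update_self]
      show labelAt t ((ν u).1 ++ r) = some ABC.a
      rw [labelAt, subtree_append, hs, Option.bind_some]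
      exact hr

lemma sat_fHasA' {t : RTree ABC rankABC} {ν : ℕ → Pos t} {u : ℕ} (hu : u ≠ 12) :
    Sat t (fHasA u) ν ↔ ∃ s, t.subtree (ν u).1 = some s ∧ hasA s := by
  obtain ⟨s, hs⟩ := Option.isSome_iff_exists.mp (ν u).2
  rw [sat_fHasA hu hs]
  constructor
  · exact fun h => ⟨s, hs, h⟩
  · rintro ⟨s', hs', h⟩
    rw [hs] at hs'
    cases hs'
    exact h

lemma sat_fBr {t : RTree ABC rankABC} {ν : ℕ → Pos t} {y : ℕ}
    (h10 : y ≠ 10) (h11 : y ≠ 11) (h12 : y ≠ 12) :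
    Sat t (fBr y) ν ↔ Branching t (ν y).1 := by
  constructor
  · intro h
    obtain ⟨u, v, ⟨⟨-, hu⟩, ⟨-, hv⟩⟩, hA, hA'⟩ := h
    rw [sat_fHasA' (by norm_num)] at hA hA'
    rw [Function.update_of_ne (show (10:ℕ) ≠ 11 by norm_num), Function.update_self] at hu hA
    rw [Function.update_of_ne h11, Function.update_of_ne h10] at hu
    rw [Function.update_self] at hv hA'
    rw [Function.update_of_ne h11, Function.update_of_ne h10] at hv
    norm_num at hu hv
    rw [hu] at hA
    rw [hv] at hA'
    exact ⟨hA, hA'⟩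
  · rintro ⟨⟨s0, hs0, hA0⟩, ⟨s1, hs1, hA1⟩⟩
    have hp0 : IsPos t ((ν y).1 ++ [0]) := by rw [IsPos, hs0]; rfl
    have hp1 : IsPos t ((ν y).1 ++ [1]) := by rw [IsPos, hs1]; rfl
    refine ⟨⟨(ν y).1 ++ [0], hp0⟩, ⟨(ν y).1 ++ [1], hp1⟩, ⟨⟨le_refl 1, ?_⟩, ⟨by norm_num, ?_⟩⟩,
      ?_, ?_⟩
    · erw [Function.update_of_ne (show (10:ℕ) ≠ 11 by norm_num), Function.update_self,
        Function.update_of_ne h11, Function.update_of_ne h10]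
    · erw [Function.update_self, Function.update_of_ne h11, Function.update_of_ne h10]
    · rw [sat_fHasA' (by norm_num)]
      erw [Function.update_of_ne (show (10:ℕ) ≠ 11 by norm_num), Function.update_self]
      exact ⟨s0, hs0, hA0⟩
    · rw [sat_fHasA' (by norm_num)]
      erw [Function.update_self]
      exact ⟨s1, hs1, hA1⟩

lemma sat_fStrict {t : RTree ABC rankABC} {ν : ℕ → Pos t} {z x : ℕ} :
    Sat t (fStrict z x) ν ↔ ((ν z).1 <+: (ν x).1 ∧ (ν z).1 ≠ (ν x).1) := by
  constructor
  · rintro ⟨h1, h2⟩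
    exact ⟨h1, fun e => h2 (pos_ext e)⟩
  · rintro ⟨h1, h2⟩
    exact ⟨h1, fun e => h2 (congrArg Subtype.val e)⟩

lemma sat_fPb {t : RTree ABC rankABC} {ν : ℕ → Pos t} {x z : ℕ}
    (hz5 : z ≠ 5) (hx5 : x ≠ 5)
    (hz10 : z ≠ 10) (hz11 : z ≠ 11) (hz12 : z ≠ 12) :
    Sat t (fPb x z) ν ↔ pbRel t (ν x).1 (ν z).1 := by
  constructor
  · rintro ⟨⟨hst, hbr⟩, hno⟩
    rw [sat_fStrict] at hst
    rw [sat_fBr hz10 hz11 hz12] at hbr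
    refine ⟨hst.1, hst.2, hbr, ?_⟩
    intro w hzw hwx hwz hwxne hwbr
    apply hno
    refine ⟨⟨w, branching_isPos hwbr⟩, ⟨?_, ?_⟩, ?_⟩
    · erw [sat_fStrict, Function.update_self, Function.update_of_ne hz5]
      exact ⟨hzw, Ne.symm hwz⟩
    · erw [sat_fStrict, Function.update_self, Function.update_of_ne hx5]
      exact ⟨hwx, hwxne⟩
    · erw [sat_fBr (by norm_num) (by norm_num) (by norm_num), Function.update_self]
      exact hwbr
  · rintro ⟨hle, hne, hbr, hmax⟩
    refine ⟨⟨?_, ?_⟩, ?_⟩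
    · rw [sat_fStrict]; exact ⟨hle, hne⟩
    · rw [sat_fBr hz10 hz11 hz12]; exact hbr
    · rintro ⟨w, ⟨h1, h2⟩, h3⟩
      rw [sat_fStrict, Function.update_self, Function.update_of_ne hz5] at h1
      rw [sat_fStrict, Function.update_self, Function.update_of_ne hx5] at h2
      rw [sat_fBr (by norm_num) (by norm_num) (by norm_num), Function.update_self] at h3
      exact hmax w.1 h1.1 h2.1 (Ne.symm h1.2) h2.2 h3

lemma sat_fStep {t : RTree ABC rankABC} {ν : ℕ → Pos t} :
    Sat t fStep ν ↔ Step2 t (ν 2).1 (ν 3).1 := by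
  constructor
  · rintro ⟨m, h1, h2⟩
    rw [sat_fPb (by norm_num) (by norm_num) (by norm_num) (by norm_num) (by norm_num)] at h1 h2
    rw [Function.update_self, Function.update_of_ne (show (2:ℕ) ≠ 4 by norm_num)] at h1
    rw [Function.update_self, Function.update_of_ne (show (3:ℕ) ≠ 4 by norm_num)] at h2
    exact ⟨m.1, h1, h2⟩
  · rintro ⟨zl, h1, h2⟩
    refine ⟨⟨zl, branching_isPos h1.2.2.1⟩, ?_, ?_⟩
    · rw [sat_fPb (by norm_num) (by norm_num) (by norm_num) (by norm_num) (by norm_num)]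
      erw [Function.update_self, Function.update_of_ne (show (2:ℕ) ≠ 4 by norm_num)]
      exact h1
    · rw [sat_fPb (by norm_num) (by norm_num) (by norm_num) (by norm_num) (by norm_num)]
      erw [Function.update_self, Function.update_of_ne (show (3:ℕ) ≠ 4 by norm_num)]
      exact h2

lemma sat_fNoBr {t : RTree ABC rankABC} {ν : ℕ → Pos t} {y : ℕ}
    (h6 : y ≠ 6) (h10 : y ≠ 10) (h11 : y ≠ 11) (h12 : y ≠ 12) :
    Sat t (fNoBr y) ν ↔ brSs t (ν y).1 = ∅ := by
  rw [show Sat t (fNoBr y) ν = ¬ Sat t (.ex 6 (.and (fStrict 6 y) (fBr 6))) ν from rfl]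
  rw [Set.eq_empty_iff_forall_notMem]
  constructor
  · intro hno q hq
    obtain ⟨hq1, hq2, hq3⟩ := hq
    apply hno
    refine ⟨⟨q, branching_isPos hq3⟩, ?_, ?_⟩
    · erw [sat_fStrict, Function.update_self, Function.update_of_ne h6]
      exact ⟨hq1, hq2⟩
    · erw [sat_fBr (by norm_num) (by norm_num) (by norm_num), Function.update_self]
      exact hq3
  · rintro hall ⟨w, h1, h2⟩
    rw [sat_fStrict, Function.update_self, Function.update_of_ne h6] at h1
    rw [sat_fBr (by norm_num) (by norm_num) (by norm_num), Function.update_self] at h2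
    exact hall w.1 ⟨h1.1, h1.2, h2⟩

/-! ### Transitive closure semantics -/

lemma fin1_eta {α : Type} (f : Fin 1 → α) : (fun _ : Fin 1 => f 0) = f :=
  funext fun i => congrArg f (Subsingleton.elim 0 i)

lemma updVec_hit {α : Type} (ν : ℕ → α) (m : ℕ) (a : Fin 1 → α) :
    updVec ν ![m] a m = a 0 := by
  unfold updVec
  have h : ∃ i : Fin 1, ![m] i = m := ⟨0, rfl⟩
  rw [dif_pos h]
  exact congrArg a (Subsingleton.elim _ _)

lemma updVec_miss {α : Type} (ν : ℕ → α) (m n : ℕ) (hnm : m ≠ n) (a : Fin 1 → α) :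
    updVec ν ![m] a n = ν n := by
  unfold updVec
  rw [dif_neg]
  rintro ⟨i, hi⟩
  rw [Matrix.cons_val_fin_one] at hi
  exact hnm hi

lemma tcRel_iff {t : RTree ABC rankABC} (ν : ℕ → Pos t) (a b : Fin 1 → Pos t) :
    Sat t fStep (updVec (updVec ν ![2] a) ![3] b) ↔ Step2 t (a 0).1 (b 0).1 := by
  rw [sat_fStep]
  rw [updVec_hit, updVec_miss _ 3 2 (by norm_num), updVec_hit]

lemma rtg_transfer {t : RTree ABC rankABC} (ν : ℕ → Pos t) (f g : Fin 1 → Pos t) :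
    Relation.ReflTransGen
      (fun a b : Fin 1 → Pos t => Sat t fStep (updVec (updVec ν ![2] a) ![3] b)) f g ↔
    Relation.ReflTransGen (Step2 t) (f 0).1 (g 0).1 := by
  constructor
  · intro h
    exact Relation.ReflTransGen.lift (fun h : Fin 1 → Pos t => (h 0).1)
      (fun a b hab => (tcRel_iff ν a b).mp hab) _ _ h
  · intro h
    have key : ∀ x y : List ℕ, Relation.ReflTransGen (Step2 t) x y →
        ∀ u : Pos t, u.1 = x → ∃ v : Pos t, v.1 = y ∧
          Relation.ReflTransGen
            (fun a b : Fin 1 → Pos t => Sat t fStep (updVec (updVec ν ![2] a) ![3] b))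
            (fun _ => u) (fun _ => v) := by
      intro x y hxy
      induction hxy using Relation.ReflTransGen.head_induction_on with
      | refl => exact fun u hu => ⟨u, hu, Relation.ReflTransGen.refl⟩
      | head hstep _ ih =>
        intro u hu
        rename_i x' m _
        obtain ⟨z, hz1, hz2⟩ := hstep
        have hm : IsPos t m := branching_isPos hz2.2.2.1
        obtain ⟨v, hv, hchain⟩ := ih ⟨m, hm⟩ rfl
        refine ⟨v, hv, Relation.ReflTransGen.head ?_ hchain⟩
        refine (tcRel_iff ν _ _).mpr ?_
        show Step2 t u.1 (⟨m, hm⟩ : Pos t).1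
        rw [hu]
        exact ⟨z, hz1, hz2⟩
    obtain ⟨v, hv, hchain⟩ := key _ _ h (f 0) rfl
    have hvg : v = g 0 := pos_ext hv
    subst hvg
    rw [← fin1_eta f, ← fin1_eta g]
    exact hchain

lemma sat_tc {t : RTree ABC rankABC} {ν : ℕ → Pos t} :
    Sat t (.tc ![2] ![3] fStep ![0] ![1]) ν ↔
      Relation.ReflTransGen (Step2 t) (ν 0).1 (ν 1).1 := by
  show Relation.ReflTransGen _ (fun i => ν (![0] i)) (fun i => ν (![1] i)) ↔ _
  rw [rtg_transfer]
  exact Iff.rfl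

/-! ### Functionality -/

lemma functionalIn_fStep : FunctionalIn fStep ![2] ![3] := by
  intro t ν a b b' h h'
  rw [tcRel_iff] at h h'
  have := step2_unique h h'
  have hb : b 0 = b' 0 := pos_ext this
  funext i
  rw [Subsingleton.elim i 0, hb]

/-! ### Free variables -/

lemma range_fin1 (m : ℕ) : Set.range ![m] = {m} := by
  ext n
  simp [Matrix.cons_val_fin_one]

lemma fv_fHasA {u : ℕ} (hu : u ≠ 12) : freeVars (fHasA u) = {u} := by
  ext n
  simp [fHasA, freeVars]
  omega

lemma fv_fBr {y : ℕ} (h10 : y ≠ 10) (h11 : y ≠ 11) (h12 : y ≠ 12) :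
    freeVars (fBr y) = {y} := by
  ext n
  simp [fBr, freeVars, fv_fHasA (u := 10) (by norm_num), fv_fHasA (u := 11) (by norm_num)]
  omega

lemma fv_fStrict (z x : ℕ) : freeVars (fStrict z x) = {z, x} := by
  ext n
  simp [fStrict, freeVars]

lemma fv_fPb {x z : ℕ} (hx5 : x ≠ 5) (hz5 : z ≠ 5)
    (h10 : z ≠ 10) (h11 : z ≠ 11) (h12 : z ≠ 12) :
    freeVars (fPb x z) = {x, z} := by
  ext n
  simp [fPb, freeVars, fv_fStrict, fv_fBr h10 h11 h12,
    fv_fBr (y := 5) (by norm_num) (by norm_num) (by norm_num)]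
  omega

lemma fv_fStep : freeVars fStep = {2, 3} := by
  ext n
  simp [fStep, freeVars,
    fv_fPb (x := 2) (z := 4) (by norm_num) (by norm_num) (by norm_num) (by norm_num) (by norm_num),
    fv_fPb (x := 4) (z := 3) (by norm_num) (by norm_num) (by norm_num) (by norm_num) (by norm_num)]
  omega

lemma fv_fNoBr {y : ℕ} (h6 : y ≠ 6) : freeVars (fNoBr y) = {y} := by
  ext n
  simp [fNoBr, freeVars, fv_fStrict,
    fv_fBr (y := 6) (by norm_num) (by norm_num) (by norm_num)]
  omega

lemma fv_fTop : freeVars fTop = ∅ := by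
  ext n
  simp [fTop, freeVars, fv_fStep, fv_fNoBr (y := 1) (by norm_num), range_fin1]
  omega

/-! ### Well-formedness and determinism -/

lemma wf_fStep : WF fStep := by
  simp [fStep, fPb, fStrict, fBr, fHasA, WF]

lemma wf_fTop : WF fTop := by
  show WF (TForm.or _ _)
  refine ⟨trivial, ?_, ?_⟩
  · refine ⟨⟨fun a b _ => Subsingleton.elim a b, fun a b _ => Subsingleton.elim a b,
      fun i j => ?_⟩, ?_, wf_fStep⟩
    · rw [Matrix.cons_val_fin_one, Matrix.cons_val_fin_one]
      norm_num
    · rw [range_fin1, range_fin1, fv_fStep]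
      intro n hn
      simp at hn ⊢
      tauto
  · simp [fNoBr, fStrict, fBr, fHasA, WF]

lemma detTC_fStep : DetTC fStep := by
  simp [fStep, fPb, fStrict, fBr, fHasA, DetTC]

lemma detTC_fTop : DetTC fTop := by
  show DetTC (TForm.or _ _)
  refine ⟨trivial, ⟨functionalIn_fStep, detTC_fStep⟩, ?_⟩
  simp [fNoBr, fStrict, fBr, fHasA, DetTC]

/-! ### The language of the formula -/

lemma tlang_iff_chain (t : RTree ABC rankABC) :
    t ∈ Tlang ↔ ∀ p : List ℕ, labelAt t p = some ABC.a →
      ∃ r, Relation.ReflTransGen (Step2 t) p r ∧ brSs t r = ∅ := by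
  unfold Tlang
  simp only [Set.mem_setOf_eq]
  refine forall_congr' fun p => ?_
  refine imp_congr_right fun hp => ?_
  rw [show Nat.card { q : List ℕ // q <+: p ∧ Branching t q } = (brS t p).ncard from
    Nat.card_coe_set_eq (brS t p)]
  rw [brS_eq_brSs_of_label_a hp]
  exact even_iff_chain t p

lemma treesOf_fTop : Tlang = treesOf fTop := by
  ext t
  rw [tlang_iff_chain]
  unfold treesOf
  simp only [Set.mem_setOf_eq]
  constructor
  · intro h u
    show ¬ _ ∨ _
    by_cases hl : labelAt t ((Function.update (fun _ => rootPos t) 0 u : ℕ → Pos t) 0).1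
        = some ABC.a
    · right
      rw [Function.update_self] at hl
      obtain ⟨r, hchain, hempty⟩ := h u.1 hl
      have hr : IsPos t r := rtg_isPos hchain u.2
      refine ⟨⟨r, hr⟩, ?_, ?_⟩
      · rw [sat_tc]
        erw [Function.update_self, Function.update_of_ne (show (0:ℕ) ≠ 1 by norm_num),
          Function.update_self]
        exact hchain
      · erw [sat_fNoBr (by norm_num) (by norm_num) (by norm_num) (by norm_num),
          Function.update_self]
        exact hempty
    · left
      exact hl
  · intro h p hp
    have hu : IsPos t p := labelAt_isPos hp
    rcases h ⟨p, hu⟩ with hno | ⟨r, htc, hnb⟩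
    · exfalso
      apply hno
      show labelAt t ((Function.update (fun _ => rootPos t) 0 (⟨p, hu⟩ : Pos t)) 0).1 = some ABC.a
      erw [Function.update_self]
      exact hp
    · erw [sat_tc, Function.update_self, Function.update_of_ne (show (0:ℕ) ≠ 1 by norm_num),
        Function.update_self] at htc
      erw [sat_fNoBr (by norm_num) (by norm_num) (by norm_num) (by norm_num),
        Function.update_self] at hnb
      exact ⟨r.1, htc, hnb⟩

theorem tlang_in_FODTC : Tlang ∈ FODTC ABC rankABC 1 :=
  ⟨fTop, wf_fTop, detTC_fTop, fv_fTop, treesOf_fTop⟩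

/-! ### The tree-walking automaton with one pebble -/

inductive Ph : Type | L | R
deriving DecidableEq

instance : Fintype Ph :=
  ⟨⟨{Ph.L, Ph.R}, by decide⟩, fun x => by cases x <;> decide⟩

inductive Kk : Type | fromDn (b : Bool) | fromUp (b : Bool)
deriving DecidableEq, Fintype

inductive St : Type
  | dn (b : Bool) | dnNotA (b : Bool) | reject | accept
  | up (b : Bool) | upNR (b : Bool) | upMove (b : Bool) | up1go (b : Bool) | up2go (b : Bool)
  | goRight (b : Bool) | dnGo (b : Bool)
  | bt (k : Kk) | btd (k : Kk)
  | sdown (ph : Ph) (k : Kk) | snotA (ph : Ph) (k : Kk) | sgo (ph : Ph) (k : Kk)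
  | retreat (ph : Ph) (k : Kk) | retUp1 (ph : Ph) (k : Kk) | retUp2 (ph : Ph) (k : Kk)
  | after1 (ph : Ph) (k : Kk) | after2 (ph : Ph) (k : Kk) | go2 (ph : Ph) (k : Kk)
  | fnd (ph : Ph) (k : Kk) | fup (ph : Ph) (k : Kk) | foundAt (ph : Ph) (k : Kk)
  | exh (ph : Ph) (k : Kk)
deriving DecidableEq, Fintype

/-- Decision at a state: halt, a single instruction, or a test branch. -/
inductive Dc : Type
  | halt
  | one (χ : TInstr ABC 1 Unit) (q : St)
  | br (τ : TTest ABC 1 Unit) (q1 q0 : St)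

def contK : Kk → Bool → St
  | .fromDn b, c => .dnGo (xor b c)
  | .fromUp b, c => .upMove (xor b c)

def delta : St → Dc
  | .dn b => .br (.lab 0 ABC.a) (if b then .reject else .up false) (.dnNotA b)
  | .dnNotA b => .br (.lab 0 ABC.b) (.up b) (.bt (.fromDn b))
  | .reject => .halt
  | .accept => .halt
  | .up b => .br (.chno 0 0) .accept (.upNR b)
  | .upNR b => .br (.lab 0 ABC.c) (.bt (.fromUp b)) (.upMove b)
  | .upMove b => .br (.chno 0 1) (.up1go b) (.up2go b)
  | .up1go b => .one (.up 0) (.goRight b)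
  | .goRight b => .one (.down 0 2) (.dn b)
  | .up2go b => .one (.up 0) (.up b)
  | .dnGo b => .one (.down 0 1) (.dn b)
  | .bt k => .one (.dropPeb 0 ()) (.btd k)
  | .btd k => .one (.down 0 1) (.sdown .L k)
  | .sdown ph k => .br (.lab 0 ABC.a) (.fnd ph k) (.snotA ph k)
  | .snotA ph k => .br (.lab 0 ABC.b) (.retreat ph k) (.sgo ph k)
  | .sgo ph k => .one (.down 0 1) (.sdown ph k)
  | .retreat ph k => .br (.chno 0 1) (.retUp1 ph k) (.retUp2 ph k)
  | .retUp1 ph k => .one (.up 0) (.after1 ph k)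
  | .retUp2 ph k => .one (.up 0) (.after2 ph k)
  | .after1 ph k => .br (.peb 0 ()) (.exh ph k) (.go2 ph k)
  | .go2 ph k => .one (.down 0 2) (.sdown ph k)
  | .after2 ph k => .br (.peb 0 ()) (.exh ph k) (.retreat ph k)
  | .fnd ph k => .br (.peb 0 ()) (.foundAt ph k) (.fup ph k)
  | .fup ph k => .one (.up 0) (.fnd ph k)
  | .foundAt .L k => .one (.down 0 2) (.sdown .R k)
  | .foundAt .R k => .one (.retrieve ()) (contK k true)
  | .exh _ k => .one (.retrieve ()) (contK k false)

def instrOf (p : St) : Set (St × TInstr ABC 1 Unit × St) :=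
  match delta p with
  | .halt => ∅
  | .one χ q => {(p, χ, q)}
  | .br τ q1 q0 => {(p, .test true τ, q1), (p, .test false τ, q0)}

lemma instrOf_finite (p : St) : (instrOf p).Finite := by
  cases hd : delta p with
  | halt => simp only [instrOf, hd]; exact Set.finite_empty
  | one χ q => simp only [instrOf, hd]; exact Set.finite_singleton _
  | br τ q1 q0 => simp only [instrOf, hd]; exact (Set.finite_singleton _).insert _

def theTWA : TWA ABC rankABC 1 where
  Q := St
  finQ := inferInstance
  X := Unit
  finX := inferInstance
  q0 := .dn false
  acc := {.accept}
  instr := ⋃ p, instrOf p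
  instrFin := Set.finite_iUnion instrOf_finite

lemma fst_of_mem_instrOf {p : St} {e : St × TInstr ABC 1 Unit × St} (h : e ∈ instrOf p) :
    e.1 = p := by
  cases hd : delta p with
  | halt => simp only [instrOf, hd] at h; exact absurd h (Set.notMem_empty _)
  | one χ q =>
    simp only [instrOf, hd, Set.mem_singleton_iff] at h
    rw [h]
  | br τ q1 q0 =>
    simp only [instrOf, hd, Set.mem_insert_iff, Set.mem_singleton_iff] at h
    rcases h with h | h <;> rw [h]

lemma mem_instr_iff {p : St} {χ : TInstr ABC 1 Unit} {q : St} :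
    (p, χ, q) ∈ theTWA.instr ↔ (p, χ, q) ∈ instrOf p := by
  constructor
  · intro h
    obtain ⟨s, ⟨p', rfl⟩, hmem⟩ := h
    have h2 := fst_of_mem_instrOf hmem
    simp only at h2
    subst h2
    exact hmem
  · intro h
    exact Set.mem_iUnion.mpr ⟨p, h⟩

lemma theTWA_det : Deterministic theTWA := by
  intro p χ1 q1 χ2 q2 h1 h2 hne
  erw [mem_instr_iff] at h1 h2
  cases hd : delta p with
  | halt => simp only [instrOf, hd] at h1; exact absurd h1 (Set.notMem_empty _)
  | one χ q =>
    simp only [instrOf, hd, Set.mem_singleton_iff] at h1 h2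
    injection h1 with _ h1'
    injection h2 with _ h2'
    exfalso
    apply hne
    rw [Prod.ext_iff] at h1' h2' ⊢
    obtain ⟨ha, hb⟩ := h1'
    obtain ⟨hc, hd⟩ := h2'
    exact ⟨ha.trans hc.symm, hb.trans hd.symm⟩
  | br τ q1' q0' =>
    simp only [instrOf, hd, Set.mem_insert_iff, Set.mem_singleton_iff] at h1 h2
    rcases h1 with h1 | h1 <;> rcases h2 with h2 | h2 <;>
      injection h1 with _ h1' <;> injection h2 with _ h2' <;>
      rw [Prod.ext_iff] at h1' h2' <;>
      obtain ⟨ha, hb⟩ := h1' <;> obtain ⟨hc, he⟩ := h2'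
    · exact absurd (by rw [Prod.ext_iff]; exact ⟨ha.trans hc.symm, hb.trans he.symm⟩) hne
    · exact Or.inl ⟨true, τ, ha, hc⟩
    · exact Or.inr ⟨true, τ, hc, ha⟩
    · exact absurd (by rw [Prod.ext_iff]; exact ⟨ha.trans hc.symm, hb.trans he.symm⟩) hne

/-! ### Functionality of the step relation -/

lemma concat_inj_left {l1 l2 : List ℕ} {j1 j2 : ℕ} (h : l1 ++ [j1] = l2 ++ [j2]) : l1 = l2 := by
  have hl : l1.length = l2.length := by
    have := congrArg List.length h
    simp at this
    omega
  exact (List.append_inj h hl).1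

lemma instrStep_det {t : RTree ABC rankABC} (ins : TInstr ABC 1 Unit)
    {hs : Fin 1 → Pos t} {π : List (Unit × Pos t)} {hs1 hs2 : Fin 1 → Pos t}
    {π1 π2 : List (Unit × Pos t)}
    (h1 : instrStep t ins hs π hs1 π1) (h2 : instrStep t ins hs π hs2 π2) :
    hs1 = hs2 ∧ π1 = π2 := by
  cases ins with
  | up i =>
    obtain ⟨hπ1, ⟨j1, hj1⟩, _⟩ := h1
    obtain ⟨hπ2, ⟨j2, hj2⟩, _⟩ := h2
    refine ⟨funext fun h => ?_, hπ1.trans hπ2.symm⟩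
    have hh : h = i := Subsingleton.elim h i
    subst hh
    exact pos_ext (concat_inj_left (hj1.symm.trans hj2))
  | down i j =>
    obtain ⟨hπ1, -, hj1, -⟩ := h1
    obtain ⟨hπ2, -, hj2, -⟩ := h2
    refine ⟨funext fun h => ?_, hπ1.trans hπ2.symm⟩
    have hh : h = i := Subsingleton.elim h i
    subst hh
    exact pos_ext (hj1.trans hj2.symm)
  | dropPeb i x =>
    obtain ⟨hh1, hπ1, -⟩ := h1
    obtain ⟨hh2, hπ2, -⟩ := h2
    exact ⟨hh1.trans hh2.symm, hπ1.trans hπ2.symm⟩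
  | retrieve x =>
    obtain ⟨hh1, w1, hπ1⟩ := h1
    obtain ⟨hh2, w2, hπ2⟩ := h2
    refine ⟨hh1.trans hh2.symm, ?_⟩
    have := hπ1.symm.trans hπ2
    injection this
  | test b τ =>
    obtain ⟨hh1, hπ1, -⟩ := h1
    obtain ⟨hh2, hπ2, -⟩ := h2
    exact ⟨hh1.trans hh2.symm, hπ1.trans hπ2.symm⟩

lemma step_fun {t : RTree ABC rankABC} {c c1 c2 : TConf theTWA t}
    (h1 : Step theTWA t c c1) (h2 : Step theTWA t c c2) : c1 = c2 := by
  obtain ⟨i1, hm1, hs1⟩ := h1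
  obtain ⟨i2, hm2, hs2⟩ := h2
  erw [mem_instr_iff] at hm1 hm2
  have ext : c1.1 = c2.1 → c1.2.1 = c2.2.1 → c1.2.2 = c2.2.2 → c1 = c2 := by
    intro ha hb hc
    exact Prod.ext ha (Prod.ext hb hc)
  cases hd : delta c.1 with
  | halt => simp only [instrOf, hd] at hm1; exact absurd hm1 (Set.notMem_empty _)
  | one χ q =>
    simp only [instrOf, hd, Set.mem_singleton_iff, Prod.mk.injEq] at hm1 hm2
    obtain ⟨hχ1, hq1⟩ := Prod.mk.inj (Prod.mk.inj hm1).2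
    obtain ⟨hχ2, hq2⟩ := Prod.mk.inj (Prod.mk.inj hm2).2
    subst hχ1; subst hχ2
    obtain ⟨ha, hb⟩ := instrStep_det _ hs1 hs2
    exact ext (hq1.trans hq2.symm) ha hb
  | br τ q1' q0' =>
    simp only [instrOf, hd, Set.mem_insert_iff, Set.mem_singleton_iff, Prod.mk.injEq]
      at hm1 hm2
    rcases hm1 with hm1 | hm1 <;> rcases hm2 with hm2 | hm2 <;>
      obtain ⟨hχ1, hq1⟩ := Prod.mk.inj (Prod.mk.inj hm1).2 <;>
      obtain ⟨hχ2, hq2⟩ := Prod.mk.inj (Prod.mk.inj hm2).2 <;> subst hχ1 <;> subst hχ2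
    · obtain ⟨ha, hb⟩ := instrStep_det _ hs1 hs2
      exact ext (hq1.trans hq2.symm) ha hb
    · exfalso
      obtain ⟨-, -, ht1⟩ := hs1
      obtain ⟨-, -, ht2⟩ := hs2
      simp at ht1 ht2
      exact ht2 ht1
    · exfalso
      obtain ⟨-, -, ht1⟩ := hs1
      obtain ⟨-, -, ht2⟩ := hs2
      simp at ht1 ht2
      exact ht1 ht2
    · obtain ⟨ha, hb⟩ := instrStep_det _ hs1 hs2
      exact ext (hq1.trans hq2.symm) ha hb

lemma rtg_halt_unique {α : Type} {R : α → α → Prop}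
    (hf : ∀ a b c, R a b → R a c → b = c)
    {a b c : α} (hb : Relation.ReflTransGen R a b) (hc : Relation.ReflTransGen R a c)
    (hbh : ∀ d, ¬ R b d) (hch : ∀ d, ¬ R c d) : b = c := by
  revert hc
  induction hb using Relation.ReflTransGen.head_induction_on with
  | refl =>
    intro hc
    rcases hc.cases_head with rfl | ⟨d, hd, -⟩
    · rfl
    · exact absurd hd (hbh d)
  | head hstep htail ih =>
    intro hc
    rcases hc.cases_head with rfl | ⟨e, he, hec⟩
    · exact absurd hstep (hch _)
    · have : e = _ := hf _ _ _ he hstep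
      subst this
      exact ih hec

/-! ### Recursive characterisation of Tlang -/

def hasAb : RTree ABC rankABC → Bool
  | .node ABC.a _ => true
  | .node ABC.b _ => false
  | .node ABC.c ch => hasAb (ch ⟨0, by decide⟩) || hasAb (ch ⟨1, by decide⟩)

def brB : RTree ABC rankABC → Bool
  | .node ABC.c ch => hasAb (ch ⟨0, by decide⟩) && hasAb (ch ⟨1, by decide⟩)
  | _ => false

def okB : Bool → RTree ABC rankABC → Bool
  | b, .node ABC.a _ => !b
  | _, .node ABC.b _ => true
  | b, .node ABC.c ch =>
      okB (xor b (hasAb (ch ⟨0, by decide⟩) && hasAb (ch ⟨1, by decide⟩))) (ch ⟨0, by decide⟩)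
        && okB (xor b (hasAb (ch ⟨0, by decide⟩) && hasAb (ch ⟨1, by decide⟩)))
             (ch ⟨1, by decide⟩)

lemma hasAb_iff (s : RTree ABC rankABC) : hasAb s = true ↔ hasA s := by
  induction s with
  | node x ch ih =>
    cases x with
    | a => simp [hasAb, hasA]
    | b =>
      rw [show hasAb (RTree.node ABC.b ch) = false from rfl]
      rw [hasA]
      constructor
      · intro h; exact absurd h (by simp)
      · rintro (h | ⟨i, -⟩)
        · exact absurd h (by decide)
        · exact absurd i.isLt (by simp [rankABC])
    | c =>
      rw [show hasAb (RTree.node ABC.c ch)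
        = (hasAb (ch ⟨0, by decide⟩) || hasAb (ch ⟨1, by decide⟩)) from rfl]
      rw [Bool.or_eq_true, ih, ih, hasA]
      constructor
      · rintro (h | h)
        · exact Or.inr ⟨_, h⟩
        · exact Or.inr ⟨_, h⟩
      · rintro (h | ⟨i, h⟩)
        · exact absurd h (by decide)
        · rcases i with ⟨iv, hiv⟩
          have h2 : iv < 2 := hiv
          interval_cases iv
          · exact Or.inl h
          · exact Or.inr h

lemma brB_iff (s : RTree ABC rankABC) : brB s = true ↔ Branching s [] := by
  cases s with
  | node x ch =>
    cases x with
    | a => exact iff_of_false (by simp [brB]) (not_branching_leaf (x := ABC.a) rfl ch)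
    | b => exact iff_of_false (by simp [brB]) (not_branching_leaf (x := ABC.b) rfl ch)
    | c =>
      rw [show brB (RTree.node ABC.c ch)
        = (hasAb (ch ⟨0, by decide⟩) && hasAb (ch ⟨1, by decide⟩)) from rfl]
      rw [Bool.and_eq_true, hasAb_iff, hasAb_iff, branching_node_c]

lemma branching_cons {ch : Fin (rankABC ABC.c) → RTree ABC rankABC} {i : ℕ}
    (hi : i < rankABC ABC.c) (w : List ℕ) :
    Branching (RTree.node ABC.c ch) (i :: w) ↔ Branching (ch ⟨i, hi⟩) w := by
  unfold Branching
  rw [List.cons_append, List.cons_append, subtree_cons, subtree_cons, child_node,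
    dif_pos hi]
  simp only [Option.bind_some]

lemma labelAt_cons {Sig : Type} {rank : Sig → ℕ} (x : Sig) (ch : Fin (rank x) → RTree Sig rank)
    (i : ℕ) (q : List ℕ) :
    labelAt (RTree.node x ch) (i :: q)
      = if h : i < rank x then labelAt (ch ⟨i, h⟩) q else none := by
  rw [labelAt, subtree_cons, child_node]
  split
  · simp only [Option.bind_some]; rfl
  · rfl

lemma brS_ncard_cons {ch : Fin (rankABC ABC.c) → RTree ABC rankABC} {i : ℕ}
    (hi : i < rankABC ABC.c) (q : List ℕ) :
    (brS (RTree.node ABC.c ch) (i :: q)).ncard =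
      (if brB (RTree.node ABC.c ch) = true then 1 else 0) + (brS (ch ⟨i, hi⟩) q).ncard := by
  set t := RTree.node ABC.c ch with ht
  have hinj : Function.Injective (List.cons i (α := ℕ)) := fun x y hxy => by injection hxy
  have himg : brS t (i :: q) \ {[]} = (List.cons i) '' brS (ch ⟨i, hi⟩) q := by
    ext w
    simp only [Set.mem_diff, Set.mem_singleton_iff, Set.mem_image, brS, Set.mem_setOf_eq]
    constructor
    · rintro ⟨⟨hpre, hbr⟩, hne⟩
      cases w with
      | nil => exact absurd rfl hne
      | cons j w' =>
        obtain ⟨hji, hpre'⟩ := List.cons_prefix_cons.mp hpre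
        subst hji
        exact ⟨w', ⟨hpre', (branching_cons hi w').mp hbr⟩, rfl⟩
    · rintro ⟨w', ⟨hpre, hbr⟩, rfl⟩
      exact ⟨⟨List.cons_prefix_cons.mpr ⟨rfl, hpre⟩, (branching_cons hi w').mpr hbr⟩, by simp⟩
  have hmem : [] ∈ brS t (i :: q) ↔ Branching t [] := by
    simp [brS, List.nil_prefix]
  have hfin : ((List.cons i) '' brS (ch ⟨i, hi⟩) q).Finite := (brS_finite _ _).image _
  by_cases hbr : Branching t []
  · rw [if_pos ((brB_iff t).mpr hbr)]
    have heq : brS t (i :: q) = insert [] ((List.cons i) '' brS (ch ⟨i, hi⟩) q) := by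
      rw [← himg, Set.insert_diff_singleton, Set.insert_eq_of_mem (hmem.mpr hbr)]
    rw [heq, Set.ncard_insert_of_notMem (by simp) hfin,
      Set.ncard_image_of_injective _ hinj]
    omega
  · rw [if_neg (fun hh => hbr ((brB_iff t).mp hh))]
    have heq : brS t (i :: q) = (List.cons i) '' brS (ch ⟨i, hi⟩) q := by
      rw [← himg, Set.diff_singleton_eq_self (fun h => hbr (hmem.mp h))]
    rw [heq, Set.ncard_image_of_injective _ hinj]
    omega

lemma okB_iff (s : RTree ABC rankABC) (b : Bool) :
    okB b s = true ↔
      ∀ p, labelAt s p = some ABC.a → (Odd ((brS s p).ncard) ↔ b = true) := by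
  induction s generalizing b with
  | node x ch ih =>
    cases x with
    | a =>
      rw [show okB b (RTree.node ABC.a ch) = !b from rfl]
      have hempty : brS (RTree.node ABC.a ch) [] = ∅ := by
        ext w
        simp only [brS, Set.mem_setOf_eq, Set.mem_empty_iff_false, iff_false, not_and]
        intro hw
        rw [List.prefix_nil] at hw
        subst hw
        exact not_branching_leaf (x := ABC.a) rfl ch
      constructor
      · intro hb p hp
        cases p with
        | nil =>
          rw [hempty]
          simp only [Set.ncard_empty]
          constructor
          · intro h; exact absurd h (by decide)
          · intro h; cases b <;> simp_all
        | cons i q =>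
          rw [labelAt_cons] at hp
          rw [dif_neg (by simp [rankABC])] at hp
          exact absurd hp (by simp)
      · intro h
        have := h [] rfl
        rw [hempty] at this
        simp only [Set.ncard_empty] at this
        cases b
        · rfl
        · exact absurd (this.mpr rfl) (by decide)
    | b =>
      rw [show okB b (RTree.node ABC.b ch) = true from rfl]
      constructor
      · intro _ p hp
        exfalso
        cases p with
        | nil => exact absurd hp (by simp [labelAt, RTree.subtree, RTree.label])
        | cons i q =>
          rw [labelAt_cons, dif_neg (by simp [rankABC])] at hp
          exact absurd hp (by simp)
      · intro _; rfl
    | c =>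
      rw [show okB b (RTree.node ABC.c ch)
        = (okB (xor b (hasAb (ch ⟨0, by decide⟩) && hasAb (ch ⟨1, by decide⟩)))
            (ch ⟨0, by decide⟩)
          && okB (xor b (hasAb (ch ⟨0, by decide⟩) && hasAb (ch ⟨1, by decide⟩)))
            (ch ⟨1, by decide⟩)) from rfl]
      rw [Bool.and_eq_true, ih, ih]
      set br := hasAb (ch ⟨0, by decide⟩) && hasAb (ch ⟨1, by decide⟩) with hbrdef
      have hbr_iff : Branching (RTree.node ABC.c ch) [] ↔ br = true := by
        rw [← brB_iff]
        rfl
      have hcard : ∀ (i : ℕ) (hi : i < rankABC ABC.c) (q : List ℕ),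
          (brS (RTree.node ABC.c ch) (i :: q)).ncard
            = (if br = true then 1 else 0) + (brS (ch ⟨i, hi⟩) q).ncard := by
        intro i hi q
        rw [brS_ncard_cons hi q]
        rfl
      have hparity : ∀ (n : ℕ),
          (Odd ((if br = true then 1 else 0) + n) ↔ b = true) ↔ (Odd n ↔ xor b br = true) := by
        intro n
        rw [Nat.odd_iff, Nat.odd_iff]
        cases b <;> cases br <;> simp <;> omega
      constructor
      · rintro ⟨hl, hr⟩ p hp
        cases p with
        | nil => exact absurd hp (by simp [labelAt, RTree.subtree, RTree.label])
        | cons i q =>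
          rw [labelAt_cons] at hp
          by_cases hi : i < rankABC ABC.c
          · rw [dif_pos hi] at hp
            rw [hcard i hi q, hparity]
            have h2 : i < 2 := hi
            interval_cases i
            · exact hl q hp
            · exact hr q hp
          · rw [dif_neg hi] at hp
            exact absurd hp (by simp)
      · intro h
        constructor
        · intro q hq
          rw [← hparity, ← hcard 0 (by decide) q]
          apply h (0 :: q)
          rw [labelAt_cons, dif_pos (by decide)]
          exact hq
        · intro q hq
          rw [← hparity, ← hcard 1 (by decide) q]
          apply h (1 :: q)
          rw [labelAt_cons, dif_pos (by decide)]
          exact hq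

lemma tlang_iff_okB (t : RTree ABC rankABC) : t ∈ Tlang ↔ okB false t = true := by
  rw [okB_iff]
  unfold Tlang
  simp only [Set.mem_setOf_eq]
  refine forall_congr' fun p => imp_congr_right fun hp => ?_
  rw [show Nat.card { q : List ℕ // q <+: p ∧ Branching t q } = (brS t p).ncard from
    Nat.card_coe_set_eq (brS t p)]
  rw [← Nat.not_odd_iff_even]
  constructor
  · intro h
    constructor
    · intro ho; exact absurd ho h
    · intro hf; exact absurd hf (by decide)
  · intro h ho
    exact absurd (h.mp ho) (by decide)

/-! ### Run construction helpers -/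

variable {t : RTree ABC rankABC}

def cfg (q : St) (p : Pos t) (π : List (Unit × Pos t)) : TConf theTWA t := (q, fun _ => p, π)

lemma mkStep {q q' : St} {χ : TInstr ABC 1 Unit} (hδ : delta q = .one χ q')
    {p p' : Pos t} {π π' : List (Unit × Pos t)}
    (hi : instrStep t χ (fun _ => p) π (fun _ => p') π') :
    Step theTWA t (cfg q p π) (cfg q' p' π') :=
  ⟨χ, mem_instr_iff.mpr (by simp [cfg, instrOf, hδ]), hi⟩

lemma stepTestT {q q1 q0 : St} {τ : TTest ABC 1 Unit} (hδ : delta q = .br τ q1 q0)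
    {p : Pos t} {π : List (Unit × Pos t)} (h : testHolds t τ (fun _ => p) π) :
    Step theTWA t (cfg q p π) (cfg q1 p π) :=
  ⟨.test true τ, mem_instr_iff.mpr (by simp [cfg, instrOf, hδ]; exact Or.inl rfl), rfl, rfl, iff_of_true h rfl⟩

lemma stepTestF {q q1 q0 : St} {τ : TTest ABC 1 Unit} (hδ : delta q = .br τ q1 q0)
    {p : Pos t} {π : List (Unit × Pos t)} (h : ¬ testHolds t τ (fun _ => p) π) :
    Step theTWA t (cfg q p π) (cfg q0 p π) :=
  ⟨.test false τ, mem_instr_iff.mpr (by simp [cfg, instrOf, hδ]; exact Or.inr rfl), rfl, rfl,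
    iff_of_false h (by simp)⟩

lemma stepUp {q q' : St} (hδ : delta q = .one (.up 0) q') {p p' : Pos t}
    {π : List (Unit × Pos t)} {j : ℕ} (h : p.1 = p'.1 ++ [j]) :
    Step theTWA t (cfg q p π) (cfg q' p' π) :=
  mkStep hδ ⟨rfl, ⟨j, h⟩, fun hh hne => absurd (Subsingleton.elim hh 0) hne⟩

lemma stepDown {q q' : St} {j : ℕ} (hδ : delta q = .one (.down 0 j) q') (hj : 1 ≤ j)
    {p p' : Pos t} {π : List (Unit × Pos t)} (h : p'.1 = p.1 ++ [j - 1]) :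
    Step theTWA t (cfg q p π) (cfg q' p' π) :=
  mkStep hδ ⟨rfl, hj, h, fun hh hne => absurd (Subsingleton.elim hh 0) hne⟩

lemma stepDrop {q q' : St} (hδ : delta q = .one (.dropPeb 0 ()) q') {p : Pos t} :
    Step theTWA t (cfg q p []) (cfg q' p [((), p)]) :=
  mkStep hδ ⟨rfl, rfl, fun w => List.not_mem_nil⟩

lemma stepRetrieve {q q' : St} (hδ : delta q = .one (.retrieve ()) q') {p v : Pos t} :
    Step theTWA t (cfg q p [((), v)]) (cfg q' p []) :=
  mkStep hδ ⟨rfl, v, rfl⟩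

lemma th_lab {p : Pos t} {π : List (Unit × Pos t)} {x : ABC} :
    testHolds t (.lab 0 x) (fun _ : Fin 1 => p) π ↔ labelAt t p.1 = some x := Iff.rfl

lemma th_peb {p v : Pos t} :
    testHolds t (.peb 0 ()) (fun _ : Fin 1 => p) [((), v)] ↔ p = v := by
  show ((), p) ∈ [((), v)] ↔ _
  simp [Prod.ext_iff]

lemma th_chno {p : Pos t} {π : List (Unit × Pos t)} {j : ℕ} :
    testHolds t (.chno 0 j) (fun _ : Fin 1 => p) π ↔ childNo p.1 = j := Iff.rfl

lemma childNo_nil : childNo ([] : List ℕ) = 0 := rfl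

lemma childNo_concat (q : List ℕ) (j : ℕ) : childNo (q ++ [j]) = j + 1 := by
  unfold childNo
  rw [List.getLast?_concat]

lemma subtree_child_pos {p : List ℕ} {x : ABC} {ch : Fin (rankABC x) → RTree ABC rankABC}
    (hs : t.subtree p = some (.node x ch)) {i : ℕ} (hi : i < rankABC x) :
    t.subtree (p ++ [i]) = some (ch ⟨i, hi⟩) := by
  rw [subtree_append, hs, Option.bind_some,
    show ([i] : List ℕ) = i :: [] from rfl, subtree_cons, child_node, dif_pos hi]
  rfl

lemma labelAt_of_subtree {p : List ℕ} {x : ABC} {ch : Fin (rankABC x) → RTree ABC rankABC}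
    (hs : t.subtree p = some (.node x ch)) : labelAt t p = some x := by
  rw [labelAt, hs]
  rfl

lemma length_ne_of_proper_prefix {v q : List ℕ} (h : v <+: q) (r : List ℕ) (j : ℕ) :
    v ≠ q ++ [j] := by
  intro he
  have := h.length_le
  have := congrArg List.length he
  simp at this
  omega

/-! ### The climb subroutine -/

lemma climb_run (ph : Ph) (k : Kk) (v : Pos t) :
    ∀ (r : List ℕ) (p : Pos t), p.1 = v.1 ++ r →
    Relation.ReflTransGen (Step theTWA t) (cfg (.fnd ph k) p [((), v)])
      (cfg (.foundAt ph k) v [((), v)]) := by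
  intro r
  induction r using List.reverseRecOn with
  | nil =>
    intro p hp
    have hpv : p = v := pos_ext (by simpa using hp)
    subst hpv
    exact Relation.ReflTransGen.single (stepTestT (show delta (.fnd ph k)
      = .br (.peb 0 ()) (.foundAt ph k) (.fup ph k) from rfl) (th_peb.mpr rfl))
  | append_singleton r' j ih =>
    intro p hp
    have hpar : IsPos t (v.1 ++ r') :=
      isPos_of_prefix ⟨[j], by rw [hp, List.append_assoc]⟩ p.2
    have hne : p ≠ v := by
      intro he
      have hlen : (v.1 ++ (r' ++ [j])).length = v.1.length := by
        rw [← hp, he]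
      simp at hlen
    refine Relation.ReflTransGen.head (stepTestF (show delta (.fnd ph k)
      = .br (.peb 0 ()) (.foundAt ph k) (.fup ph k) from rfl)
      (fun h => hne (th_peb.mp h))) ?_
    refine Relation.ReflTransGen.head
      (stepUp (show delta (.fup ph k) = .one (.up 0) (.fnd ph k) from rfl)
        (p' := ⟨v.1 ++ r', hpar⟩) (j := j) (by rw [hp, List.append_assoc])) ?_
    exact ih ⟨v.1 ++ r', hpar⟩ rfl

/-! ### delta equations -/

lemma d_dn (b) : delta (.dn b) = .br (.lab 0 ABC.a) (if b then .reject else .up false) (.dnNotA b) := rfl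
lemma d_dnNotA (b) : delta (.dnNotA b) = .br (.lab 0 ABC.b) (.up b) (.bt (.fromDn b)) := rfl
lemma d_up (b) : delta (.up b) = .br (.chno 0 0) .accept (.upNR b) := rfl
lemma d_upNR (b) : delta (.upNR b) = .br (.lab 0 ABC.c) (.bt (.fromUp b)) (.upMove b) := rfl
lemma d_upMove (b) : delta (.upMove b) = .br (.chno 0 1) (.up1go b) (.up2go b) := rfl
lemma d_up1go (b) : delta (.up1go b) = .one (.up 0) (.goRight b) := rfl
lemma d_goRight (b) : delta (.goRight b) = .one (.down 0 2) (.dn b) := rfl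
lemma d_up2go (b) : delta (.up2go b) = .one (.up 0) (.up b) := rfl
lemma d_dnGo (b) : delta (.dnGo b) = .one (.down 0 1) (.dn b) := rfl
lemma d_bt (k) : delta (.bt k) = .one (.dropPeb 0 ()) (.btd k) := rfl
lemma d_btd (k) : delta (.btd k) = .one (.down 0 1) (.sdown .L k) := rfl
lemma d_sdown (ph k) : delta (.sdown ph k) = .br (.lab 0 ABC.a) (.fnd ph k) (.snotA ph k) := rfl
lemma d_snotA (ph k) : delta (.snotA ph k) = .br (.lab 0 ABC.b) (.retreat ph k) (.sgo ph k) := rfl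
lemma d_sgo (ph k) : delta (.sgo ph k) = .one (.down 0 1) (.sdown ph k) := rfl
lemma d_retreat (ph k) : delta (.retreat ph k) = .br (.chno 0 1) (.retUp1 ph k) (.retUp2 ph k) := rfl
lemma d_retUp1 (ph k) : delta (.retUp1 ph k) = .one (.up 0) (.after1 ph k) := rfl
lemma d_retUp2 (ph k) : delta (.retUp2 ph k) = .one (.up 0) (.after2 ph k) := rfl
lemma d_after1 (ph k) : delta (.after1 ph k) = .br (.peb 0 ()) (.exh ph k) (.go2 ph k) := rfl
lemma d_go2 (ph k) : delta (.go2 ph k) = .one (.down 0 2) (.sdown ph k) := rfl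
lemma d_after2 (ph k) : delta (.after2 ph k) = .br (.peb 0 ()) (.exh ph k) (.retreat ph k) := rfl
lemma d_fnd (ph k) : delta (.fnd ph k) = .br (.peb 0 ()) (.foundAt ph k) (.fup ph k) := rfl
lemma d_foundAtL (k) : delta (.foundAt .L k) = .one (.down 0 2) (.sdown .R k) := rfl
lemma d_foundAtR (k) : delta (.foundAt .R k) = .one (.retrieve ()) (contK k true) := rfl
lemma d_exh (ph k) : delta (.exh ph k) = .one (.retrieve ()) (contK k false) := rfl

lemma lab_ne {t : RTree ABC rankABC} {p : Pos t} {x y : ABC} (hs : labelAt t p.1 = some x)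
    (hxy : x ≠ y) : ¬ (labelAt t p.1 = some y) :=
  fun h => hxy (Option.some.inj (hs.symm.trans h))

lemma ne_of_below {t : RTree ABC rankABC} {v q p : Pos t} {j : ℕ}
    (hv : v.1 <+: q.1) (hp : p.1 = q.1 ++ [j]) : p ≠ v := by
  intro he
  have h1 := hv.length_le
  have h2 : p.1.length = q.1.length + 1 := by rw [hp]; simp
  rw [he] at h2
  omega

/-! ### The retreat subroutine -/

lemma retreat_run {t : RTree ABC rankABC} (ph : Ph) (k : Kk) (v q p : Pos t) {j : ℕ}
    (hp : p.1 = q.1 ++ [j]) (hj : j = 0 ∨ j = 1) :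
    Relation.ReflTransGen (Step theTWA t) (cfg (.retreat ph k) p [((), v)])
      (cfg (if j = 0 then .after1 ph k else .after2 ph k) q [((), v)]) := by
  have hch : childNo p.1 = j + 1 := by rw [hp, childNo_concat]
  rcases hj with rfl | rfl
  · rw [if_pos rfl]
    refine Relation.ReflTransGen.head (stepTestT (d_retreat ph k) (th_chno.mpr hch)) ?_
    exact Relation.ReflTransGen.single (stepUp (d_retUp1 ph k) hp)
  · rw [if_neg (by norm_num)]
    refine Relation.ReflTransGen.head
      (stepTestF (d_retreat ph k) (fun h => by rw [th_chno, hch] at h; omega)) ?_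
    exact Relation.ReflTransGen.single (stepUp (d_retUp2 ph k) hp)

/-! ### The search subroutine -/

lemma search_run {t : RTree ABC rankABC} (s : RTree ABC rankABC) :
    ∀ (ph : Ph) (k : Kk) (v q : Pos t) (j : ℕ) (p : Pos t),
      t.subtree p.1 = some s → p.1 = q.1 ++ [j] → (j = 0 ∨ j = 1) → v.1 <+: q.1 →
      (hasAb s = true →
        Relation.ReflTransGen (Step theTWA t) (cfg (.sdown ph k) p [((), v)])
          (cfg (.foundAt ph k) v [((), v)])) ∧
      (hasAb s = false →
        Relation.ReflTransGen (Step theTWA t) (cfg (.sdown ph k) p [((), v)])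
          (cfg (if j = 0 then .after1 ph k else .after2 ph k) q [((), v)])) := by
  induction s with
  | node x ch ih =>
    intro ph k v q j p hs hp hj hv
    have hqp : q.1 <+: p.1 := ⟨[j], hp.symm⟩
    have hvp : v.1 <+: p.1 := hv.trans hqp
    cases x with
    | a =>
      constructor
      · intro _
        refine Relation.ReflTransGen.head
          (stepTestT (d_sdown ph k) (th_lab.mpr (labelAt_of_subtree hs))) ?_
        obtain ⟨r, hr⟩ := hvp
        exact climb_run ph k v r p hr.symm
      · intro h
        exact absurd h (by simp [hasAb])
    | b =>
      constructor
      · intro h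
        exact absurd h (by simp [hasAb])
      · intro _
        refine Relation.ReflTransGen.head (stepTestF (d_sdown ph k)
          (fun h => lab_ne (labelAt_of_subtree hs) (by decide) (th_lab.mp h))) ?_
        refine Relation.ReflTransGen.head
          (stepTestT (d_snotA ph k) (th_lab.mpr (labelAt_of_subtree hs))) ?_
        exact retreat_run ph k v q p hp hj
    | c =>
      have h20 : (0:ℕ) < rankABC ABC.c := by decide
      have h21 : (1:ℕ) < rankABC ABC.c := by decide
      have hs0 := subtree_child_pos hs h20
      have hs1 := subtree_child_pos hs h21
      have hpos0 : IsPos t (p.1 ++ [0]) := by rw [IsPos, hs0]; rfl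
      have hpos1 : IsPos t (p.1 ++ [1]) := by rw [IsPos, hs1]; rfl
      set p0 : Pos t := ⟨p.1 ++ [0], hpos0⟩ with hp0
      set p1 : Pos t := ⟨p.1 ++ [1], hpos1⟩ with hp1
      have hpre : Relation.ReflTransGen (Step theTWA t) (cfg (.sdown ph k) p [((), v)])
          (cfg (.sdown ph k) p0 [((), v)]) := by
        refine Relation.ReflTransGen.head (stepTestF (d_sdown ph k)
          (fun h => lab_ne (labelAt_of_subtree hs) (by decide) (th_lab.mp h))) ?_
        refine Relation.ReflTransGen.head (stepTestF (d_snotA ph k)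
          (fun h => lab_ne (labelAt_of_subtree hs) (by decide) (th_lab.mp h))) ?_
        exact Relation.ReflTransGen.single (stepDown (d_sgo ph k) (by norm_num) rfl)
      have ihl := ih ⟨0, h20⟩ ph k v p 0 p0 hs0 rfl (Or.inl rfl) hvp
      have ihr := ih ⟨1, h21⟩ ph k v p 1 p1 hs1 rfl (Or.inr rfl) hvp
      have hne : p ≠ v := ne_of_below hv hp
      have hhasAb : hasAb (RTree.node ABC.c ch)
          = (hasAb (ch ⟨0, h20⟩) || hasAb (ch ⟨1, h21⟩)) := rfl
      cases hl : hasAb (ch ⟨0, h20⟩) with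
      | true =>
        have hfound := hpre.trans (ihl.1 hl)
        constructor
        · intro _
          exact hfound
        · intro h
          rw [hhasAb, hl] at h
          simp at h
      | false =>
        have hafter1 := hpre.trans ((ihl.2 hl).trans (by rw [if_pos rfl]))
        -- at after1 at p; pebble not here
        have hgo : Relation.ReflTransGen (Step theTWA t) (cfg (.after1 ph k) p [((), v)])
            (cfg (.sdown ph k) p1 [((), v)]) := by
          refine Relation.ReflTransGen.head (stepTestF (d_after1 ph k)
            (fun h => hne (th_peb.mp h))) ?_
          exact Relation.ReflTransGen.single (stepDown (d_go2 ph k) (by norm_num) rfl)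
        cases hr : hasAb (ch ⟨1, h21⟩) with
        | true =>
          have hfound := (hafter1.trans hgo).trans (ihr.1 hr)
          constructor
          · intro _
            exact hfound
          · intro h
            rw [hhasAb, hl, hr] at h
            simp at h
        | false =>
          have hafter2 := ((hafter1.trans hgo).trans (ihr.2 hr)).trans
            (by rw [if_neg (by norm_num)])
          have hret : Relation.ReflTransGen (Step theTWA t) (cfg (.after2 ph k) p [((), v)])
              (cfg (if j = 0 then St.after1 ph k else St.after2 ph k) q [((), v)]) := by
            refine Relation.ReflTransGen.head (stepTestF (d_after2 ph k)
              (fun h => hne (th_peb.mp h))) ?_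
            exact retreat_run ph k v q p hp hj
          constructor
          · intro h
            rw [hhasAb, hl, hr] at h
            simp at h
          · intro _
            exact hafter2.trans hret

/-! ### The branching-test subroutine -/

lemma bt_run {t : RTree ABC rankABC} (k : Kk) (v : Pos t)
    {ch : Fin (rankABC ABC.c) → RTree ABC rankABC}
    (hs : t.subtree v.1 = some (RTree.node ABC.c ch)) :
    Relation.ReflTransGen (Step theTWA t) (cfg (.bt k) v [])
      (cfg (contK k (brB (RTree.node ABC.c ch))) v []) := by
  have h20 : (0:ℕ) < rankABC ABC.c := by decide
  have h21 : (1:ℕ) < rankABC ABC.c := by decide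
  have hs0 := subtree_child_pos hs h20
  have hs1 := subtree_child_pos hs h21
  have hpos0 : IsPos t (v.1 ++ [0]) := by rw [IsPos, hs0]; rfl
  have hpos1 : IsPos t (v.1 ++ [1]) := by rw [IsPos, hs1]; rfl
  set v0 : Pos t := ⟨v.1 ++ [0], hpos0⟩
  set v1 : Pos t := ⟨v.1 ++ [1], hpos1⟩
  have hbrB : brB (RTree.node ABC.c ch)
      = (hasAb (ch ⟨0, h20⟩) && hasAb (ch ⟨1, h21⟩)) := rfl
  have hpre : Relation.ReflTransGen (Step theTWA t) (cfg (.bt k) v [])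
      (cfg (.sdown .L k) v0 [((), v)]) := by
    refine Relation.ReflTransGen.head (stepDrop (d_bt k)) ?_
    exact Relation.ReflTransGen.single (stepDown (d_btd k) (by norm_num) rfl)
  have srl := search_run (ch ⟨0, h20⟩) Ph.L k v v 0 v0 hs0 rfl (Or.inl rfl)
    (List.prefix_refl _)
  have srr := search_run (ch ⟨1, h21⟩) Ph.R k v v 1 v1 hs1 rfl (Or.inr rfl)
    (List.prefix_refl _)
  cases hl : hasAb (ch ⟨0, h20⟩) with
  | false =>
    have hchain := hpre.trans ((srl.2 hl).trans (by rw [if_pos rfl]))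
    have hexh : Relation.ReflTransGen (Step theTWA t) (cfg (.after1 .L k) v [((), v)])
        (cfg (contK k false) v []) := by
      refine Relation.ReflTransGen.head (stepTestT (d_after1 .L k) (th_peb.mpr rfl)) ?_
      exact Relation.ReflTransGen.single (stepRetrieve (d_exh .L k))
    rw [hbrB, hl]
    exact hchain.trans hexh
  | true =>
    have hchain := hpre.trans (srl.1 hl)
    have hgo : Relation.ReflTransGen (Step theTWA t) (cfg (.foundAt .L k) v [((), v)])
        (cfg (.sdown .R k) v1 [((), v)]) :=
      Relation.ReflTransGen.single (stepDown (d_foundAtL k) (by norm_num) rfl)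
    cases hr : hasAb (ch ⟨1, h21⟩) with
    | true =>
      have hfin : Relation.ReflTransGen (Step theTWA t) (cfg (.foundAt .R k) v [((), v)])
          (cfg (contK k true) v []) :=
        Relation.ReflTransGen.single (stepRetrieve (d_foundAtR k))
      rw [hbrB, hl, hr]
      exact ((hchain.trans hgo).trans (srr.1 hr)).trans hfin
    | false =>
      have hafter2 := ((hchain.trans hgo).trans (srr.2 hr)).trans
        (by rw [if_neg (by norm_num)])
      have hexh : Relation.ReflTransGen (Step theTWA t) (cfg (.after2 .R k) v [((), v)])
          (cfg (contK k false) v []) := by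
        refine Relation.ReflTransGen.head (stepTestT (d_after2 .R k) (th_peb.mpr rfl)) ?_
        exact Relation.ReflTransGen.single (stepRetrieve (d_exh .R k))
      rw [hbrB, hl, hr]
      exact hafter2.trans hexh

/-! ### The up-walk subroutine -/

lemma up_run {t : RTree ABC rankABC} (s : RTree ABC rankABC) (β : Bool) (p : Pos t)
    (hs : t.subtree p.1 = some s) (q : Pos t) (j : ℕ) (hp : p.1 = q.1 ++ [j]) :
    Relation.ReflTransGen (Step theTWA t) (cfg (.up β) p [])
      (cfg (.upMove (xor β (brB s))) p []) := by
  have hch : childNo p.1 = j + 1 := by rw [hp, childNo_concat]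
  refine Relation.ReflTransGen.head
    (stepTestF (d_up β) (fun h => by rw [th_chno, hch] at h; omega)) ?_
  cases s with
  | node x ch =>
    cases x with
    | a =>
      rw [show brB (RTree.node ABC.a ch) = false from rfl, Bool.xor_false]
      exact Relation.ReflTransGen.single (stepTestF (d_upNR β)
        (fun h => lab_ne (labelAt_of_subtree hs) (by decide) (th_lab.mp h)))
    | b =>
      rw [show brB (RTree.node ABC.b ch) = false from rfl, Bool.xor_false]
      exact Relation.ReflTransGen.single (stepTestF (d_upNR β)
        (fun h => lab_ne (labelAt_of_subtree hs) (by decide) (th_lab.mp h)))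
    | c =>
      refine Relation.ReflTransGen.head
        (stepTestT (d_upNR β) (th_lab.mpr (labelAt_of_subtree hs))) ?_
      exact bt_run (.fromUp β) p hs

/-! ### The main traversal -/

lemma xor_cancel (a b : Bool) : xor (xor a b) b = a := by cases a <;> cases b <;> rfl

lemma main_run {t : RTree ABC rankABC} (s : RTree ABC rankABC) :
    ∀ (b : Bool) (p : Pos t), t.subtree p.1 = some s →
      (okB b s = true →
        Relation.ReflTransGen (Step theTWA t) (cfg (.dn b) p [])
          (cfg (.up (xor b (brB s))) p [])) ∧
      (okB b s = false →
        ∃ w : Pos t, Relation.ReflTransGen (Step theTWA t) (cfg (.dn b) p [])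
          (cfg .reject w [])) := by
  induction s with
  | node x ch ih =>
    intro b p hs
    cases x with
    | a =>
      cases b with
      | false =>
        constructor
        · intro _
          rw [show brB (RTree.node ABC.a ch) = false from rfl,
            show xor false false = false from rfl]
          exact Relation.ReflTransGen.single (stepTestT (d_dn false)
            (th_lab.mpr (labelAt_of_subtree hs)))
        · intro h
          exact absurd h (by simp [okB])
      | true =>
        constructor
        · intro h
          exact absurd h (by simp [okB])
        · intro _
          exact ⟨p, Relation.ReflTransGen.single (stepTestT (d_dn true)
            (th_lab.mpr (labelAt_of_subtree hs)))⟩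
    | b =>
      constructor
      · intro _
        rw [show brB (RTree.node ABC.b ch) = false from rfl,
          show xor b false = b from by cases b <;> rfl]
        refine Relation.ReflTransGen.head (stepTestF (d_dn b)
          (fun h => lab_ne (labelAt_of_subtree hs) (by decide) (th_lab.mp h))) ?_
        exact Relation.ReflTransGen.single (stepTestT (d_dnNotA b)
          (th_lab.mpr (labelAt_of_subtree hs)))
      · intro h
        exact absurd h (by simp [okB])
    | c =>
      have h20 : (0:ℕ) < rankABC ABC.c := by decide
      have h21 : (1:ℕ) < rankABC ABC.c := by decide
      have hs0 := subtree_child_pos hs h20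
      have hs1 := subtree_child_pos hs h21
      have hpos0 : IsPos t (p.1 ++ [0]) := by rw [IsPos, hs0]; rfl
      have hpos1 : IsPos t (p.1 ++ [1]) := by rw [IsPos, hs1]; rfl
      set p0 : Pos t := ⟨p.1 ++ [0], hpos0⟩
      set p1 : Pos t := ⟨p.1 ++ [1], hpos1⟩
      set br := brB (RTree.node ABC.c ch) with hbr
      set b' := xor b br with hb'
      have hokB : okB b (RTree.node ABC.c ch)
          = (okB b' (ch ⟨0, h20⟩) && okB b' (ch ⟨1, h21⟩)) := rfl
      have hpre : Relation.ReflTransGen (Step theTWA t) (cfg (.dn b) p [])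
          (cfg (.dn b') p0 []) := by
        refine Relation.ReflTransGen.head (stepTestF (d_dn b)
          (fun h => lab_ne (labelAt_of_subtree hs) (by decide) (th_lab.mp h))) ?_
        refine Relation.ReflTransGen.head (stepTestF (d_dnNotA b)
          (fun h => lab_ne (labelAt_of_subtree hs) (by decide) (th_lab.mp h))) ?_
        refine (bt_run (.fromDn b) p hs).trans ?_
        exact Relation.ReflTransGen.single (stepDown (d_dnGo b') (by norm_num) rfl)
      have ihl := ih ⟨0, h20⟩ b' p0 hs0
      have ihr := ih ⟨1, h21⟩ b' p1 hs1
      cases hl : okB b' (ch ⟨0, h20⟩) with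
      | false =>
        constructor
        · intro h
          rw [hokB, hl] at h
          simp at h
        · intro _
          obtain ⟨w, hw⟩ := ihl.2 hl
          exact ⟨w, hpre.trans hw⟩
      | true =>
        -- left child done, walk up and over to right child
        have hup : Relation.ReflTransGen (Step theTWA t) (cfg (.dn b') p0 [])
            (cfg (.upMove b') p0 []) := by
          refine (ihl.1 hl).trans ?_
          have := up_run (ch ⟨0, h20⟩) (xor b' (brB (ch ⟨0, h20⟩))) p0 hs0 p 0 rfl
          rwa [xor_cancel] at this
        have hover : Relation.ReflTransGen (Step theTWA t) (cfg (.upMove b') p0 [])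
            (cfg (.dn b') p1 []) := by
          refine Relation.ReflTransGen.head (stepTestT (d_upMove b')
            (th_chno.mpr (by rw [show p0.1 = p.1 ++ [0] from rfl, childNo_concat]))) ?_
          refine Relation.ReflTransGen.head (stepUp (d_up1go b') (j := 0) rfl) ?_
          exact Relation.ReflTransGen.single (stepDown (d_goRight b') (by norm_num) rfl)
        cases hr : okB b' (ch ⟨1, h21⟩) with
        | false =>
          constructor
          · intro h
            rw [hokB, hl, hr] at h
            simp at h
          · intro _
            obtain ⟨w, hw⟩ := ihr.2 hr
            exact ⟨w, ((hpre.trans hup).trans hover).trans hw⟩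
        | true =>
          have hupr : Relation.ReflTransGen (Step theTWA t) (cfg (.dn b') p1 [])
              (cfg (.upMove b') p1 []) := by
            refine (ihr.1 hr).trans ?_
            have := up_run (ch ⟨1, h21⟩) (xor b' (brB (ch ⟨1, h21⟩))) p1 hs1 p 1 rfl
            rwa [xor_cancel] at this
          have hfin : Relation.ReflTransGen (Step theTWA t) (cfg (.upMove b') p1 [])
              (cfg (.up b') p []) := by
            refine Relation.ReflTransGen.head (stepTestF (d_upMove b')
              (fun h => by
                rw [th_chno, show p1.1 = p.1 ++ [1] from rfl, childNo_concat] at h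
                omega)) ?_
            exact Relation.ReflTransGen.single (stepUp (d_up2go b') (j := 1) rfl)
          constructor
          · intro _
            exact (((hpre.trans hup).trans hover).trans hupr).trans hfin
          · intro h
            rw [hokB, hl, hr] at h
            simp at h

/-! ### Acceptance -/

lemma halting_of_delta_halt {t : RTree ABC rankABC} {c : TConf theTWA t}
    (h : delta c.1 = .halt) : HaltingConf theTWA t c := by
  rintro c' ⟨ins, hm, -⟩
  erw [mem_instr_iff] at hm
  simp only [instrOf, h] at hm
  exact hm

lemma accepts_of_okB {t : RTree ABC rankABC} (h : okB false t = true) : Accepts theTWA t := by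
  have hroot : t.subtree (rootPos t).1 = some t := rfl
  have hchain := (main_run t false (rootPos t) hroot).1 h
  have hlast : Step theTWA t (cfg (.up (xor false (brB t))) (rootPos t) [])
      (cfg .accept (rootPos t) []) :=
    stepTestT (d_up _) (th_chno.mpr childNo_nil)
  exact ⟨.accept, rfl, hchain.trans (Relation.ReflTransGen.single hlast),
    halting_of_delta_halt rfl⟩

lemma okB_of_accepts {t : RTree ABC rankABC} (h : Accepts theTWA t) : okB false t = true := by
  by_contra hno
  have hno' : okB false t = false := by
    cases hb : okB false t
    · rfl
    · exact absurd hb hno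
  obtain ⟨q, hq, hchain, hhalt⟩ := h
  have hqacc : q = St.accept := hq
  subst hqacc
  obtain ⟨w, hw⟩ := (main_run t false (rootPos t) rfl).2 hno'
  have hrejhalt : HaltingConf theTWA t (cfg .reject w []) := halting_of_delta_halt rfl
  have heq := rtg_halt_unique (R := Step theTWA t) (fun _ _ _ hab hac => step_fun hab hac) hw hchain
    hrejhalt hhalt
  have : St.reject = St.accept := congrArg Prod.fst heq
  exact absurd this (by decide)

lemma lang_eq : Tlang = Lang theTWA := by
  ext t
  rw [tlang_iff_okB]
  constructor
  · exact fun h => accepts_of_okB h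
  · exact fun h => okB_of_accepts h
/-- The language `T` is definable in `FO+DTC^1` and is accepted
by a deterministic single-head tree-walking automaton with a single (trivially
nested) pebble. -/
theorem Tlang_FODTC1_and_one_pebble :
    Tlang ∈ FODTC ABC rankABC 1 ∧
    ∃ A : TWA ABC rankABC 1, Deterministic A ∧ @Fintype.card A.X A.finX = 1 ∧
      Tlang = Lang A :=
  ⟨tlang_in_FODTC, theTWA, theTWA_det, rfl, lang_eq⟩

end NestedPebbles
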